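/- Let k be an algebraically closed field of characteristic ℓ > 0. Suppose G = NH is a finite group with N ⊴ G and H ≤ G such that M := N ∩ H is normal in N. Let χ be a simple kN-module, ξ a simple kM-module lying under χ, and φ a simple kN_ξ-module lying over ξ such that χ ≅ Ind^N_{N_ξ} φ. Assume further that H_χ ≤ H_ξ and that ξ ≅ Res^{N_ξ}_M φ. Then: (i) H_χ = H_φ, and this group is contained in H_ξ; (ii) the following three conditions are equivalent: χ extends to G_χ; ξ extends to H_χ; φ extends to H_χ N_ξ. -/

import Mathlib

noncomputable section

open CategoryTheory Pointwise

universe u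

variable {k : Type u} [Field k] {G : Type u} [Group G]

/-- `g` conjugates the representation `ρ` of the subgroup `K` to an isomorphic one. -/
def IsConjInv {V : Type u} [AddCommGroup V] [Module k V] (K : Subgroup G)
    (ρ : Representation k ↥K V) (g : G) : Prop :=
  ∃ e : V ≃ₗ[k] V, ∀ (x : G) (hx : x ∈ K) (hx' : g * x * g⁻¹ ∈ K) (v : V),
    e (ρ ⟨x, hx⟩ v) = ρ ⟨g * x * g⁻¹, hx'⟩ (e v)

/-- The stabilizer, inside a subgroup `X` normalizing `K`, of the isomorphism class of a
representation `ρ` of `K`. -/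
def stabilizerIn {V : Type u} [AddCommGroup V] [Module k V] (X K : Subgroup G)
    (hX : ∀ g ∈ X, ∀ x ∈ K, g * x * g⁻¹ ∈ K)
    (ρ : Representation k ↥K V) : Subgroup G where
  carrier := {g | g ∈ X ∧ IsConjInv K ρ g}
  one_mem' := by
    refine ⟨X.one_mem, LinearEquiv.refl k V, ?_⟩
    intro x hx hx' v
    have h1 : (⟨1 * x * 1⁻¹, hx'⟩ : ↥K) = ⟨x, hx⟩ := Subtype.ext (by group)
    rw [h1]
    rfl
  mul_mem' := by
    rintro a b ⟨haX, ea, hea⟩ ⟨hbX, eb, heb⟩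
    refine ⟨X.mul_mem haX hbX, eb.trans ea, ?_⟩
    intro x hx hx' v
    have hb' : b * x * b⁻¹ ∈ K := hX b hbX x hx
    have ha' : a * (b * x * b⁻¹) * a⁻¹ ∈ K := hX a haX _ hb'
    have key : (⟨a * (b * x * b⁻¹) * a⁻¹, ha'⟩ : ↥K) = ⟨a * b * x * (a * b)⁻¹, hx'⟩ :=
      Subtype.ext (by group)
    simp only [LinearEquiv.trans_apply]
    rw [heb x hx hb' v, hea _ hb' ha' (eb v), key]
  inv_mem' := by
    rintro a ⟨haX, e, he⟩
    refine ⟨X.inv_mem haX, e.symm, ?_⟩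
    intro x hx hx' v
    have h2 : a * (a⁻¹ * x * a⁻¹⁻¹) * a⁻¹ ∈ K := hX a haX _ hx'
    have key : (⟨a * (a⁻¹ * x * a⁻¹⁻¹) * a⁻¹, h2⟩ : ↥K) = ⟨x, hx⟩ := Subtype.ext (by group)
    have h3 := he _ hx' h2 (e.symm v)
    rw [key, e.apply_symm_apply] at h3
    rw [← h3, e.symm_apply_apply]

/-- A representation is simple (irreducible). -/
def RepIsSimple {Γ V : Type u} [Group Γ] [AddCommGroup V] [Module k V]
    (ρ : Representation k Γ V) : Prop :=
  Nontrivial V ∧ ∀ p : Submodule k V, (∀ (g : Γ) (v : V), v ∈ p → ρ g v ∈ p) → p = ⊥ ∨ p = ⊤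

/-- The carrier of the representation of `Γ` induced along `ι : K →* Γ`
(realized as functions `Γ → V` with the usual equivariance property). -/
def indCarrier {Γ K V : Type u} [Group Γ] [Group K] [AddCommGroup V] [Module k V]
    (ι : K →* Γ) (ρ : Representation k K V) : Submodule k (Γ → V) where
  carrier := {f | ∀ (h : K) (x : Γ), f (ι h * x) = ρ h (f x)}
  add_mem' := fun {f g} hf hg => by
    intro h x
    simp only [Pi.add_apply, hf h x, hg h x, map_add]
  zero_mem' := by
    intro h x
    simp
  smul_mem' := fun c {f} hf => by
    intro h x
    simp only [Pi.smul_apply, hf h x, map_smul]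

/-- The representation of `Γ` induced along `ι : K →* Γ` from `ρ`. -/
def indRep {Γ K V : Type u} [Group Γ] [Group K] [AddCommGroup V] [Module k V]
    (ι : K →* Γ) (ρ : Representation k K V) :
    Representation k Γ ↥(indCarrier ι ρ) where
  toFun g :=
    { toFun := fun f => ⟨fun x => (f : Γ → V) (x * g), by
        intro h x
        simpa [mul_assoc] using f.2 h (x * g)⟩
      map_add' := fun f f' => rfl
      map_smul' := fun c f => rfl }
  map_one' := by
    ext f x
    simp
  map_mul' g g' := by
    ext f x
    simp [mul_assoc]

/-- Two representations of the same group are isomorphic. -/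
def IsRepIso {Γ V W : Type u} [Group Γ] [AddCommGroup V] [Module k V] [AddCommGroup W]
    [Module k W] (ρ₁ : Representation k Γ V) (ρ₂ : Representation k Γ W) : Prop :=
  ∃ e : V ≃ₗ[k] W, ∀ (g : Γ) (v : V), e (ρ₁ g v) = ρ₂ g (e v)

/-- For subgroups `K ≤ L`, the `L`-representation `ρL` lies over the `K`-representation `ρK`,
i.e. there is a nonzero `K`-equivariant map from `ρK` to the restriction of `ρL`. -/
def LiesOverDep {V W : Type u} [AddCommGroup V] [Module k V] [AddCommGroup W] [Module k W]
    (K L : Subgroup G) (ρK : Representation k ↥K V) (ρL : Representation k ↥L W) : Prop :=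
  ∃ T : V →ₗ[k] W, T ≠ 0 ∧ ∀ (x : G) (hK : x ∈ K) (hL : x ∈ L) (v : V),
    T (ρK ⟨x, hK⟩ v) = ρL ⟨x, hL⟩ (T v)

/-- For subgroups `K ≤ L`, the restriction to `K` of the `L`-representation `ρL` is
isomorphic to `ρK`. -/
def RestrictIsoDep {V W : Type u} [AddCommGroup V] [Module k V] [AddCommGroup W] [Module k W]
    (K L : Subgroup G) (ρK : Representation k ↥K V) (ρL : Representation k ↥L W) : Prop :=
  ∃ e : V ≃ₗ[k] W, ∀ (x : G) (hK : x ∈ K) (hL : x ∈ L) (v : V),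
    e (ρK ⟨x, hK⟩ v) = ρL ⟨x, hL⟩ (e v)

/-- For subgroups `K ≤ L`, the representation `ρ` of `K` extends to `L`: there is a
representation of `L` whose restriction to `K` is isomorphic to `ρ`. -/
def RepExtendsDep {V : Type u} [AddCommGroup V] [Module k V]
    (K L : Subgroup G) (ρ : Representation k ↥K V) : Prop :=
  ∃ σ : Representation k ↥L V, ∃ e : V ≃ₗ[k] V, ∀ (g : G) (hK : g ∈ K) (hL : g ∈ L) (v : V),
    e (ρ ⟨g, hK⟩ v) = σ ⟨g, hL⟩ (e v)

lemma stabilizerIn_le {V : Type u} [AddCommGroup V] [Module k V] (X K : Subgroup G)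
    (hX : ∀ g ∈ X, ∀ x ∈ K, g * x * g⁻¹ ∈ K) (ρ : Representation k ↥K V) :
    stabilizerIn X K hX ρ ≤ X := fun _ hg => hg.1

namespace Stmt6

variable {V W : Type u} [AddCommGroup V] [Module k V] [AddCommGroup W] [Module k W]

lemma mem_stabilizerIn {X K : Subgroup G} {hX : ∀ g ∈ X, ∀ x ∈ K, g * x * g⁻¹ ∈ K}
    {ρ : Representation k ↥K V} {g : G} :
    g ∈ stabilizerIn X K hX ρ ↔ g ∈ X ∧ IsConjInv K ρ g := Iff.rfl

lemma rep_congr {Γ : Type u} [Group Γ] (ρ : Representation k Γ V) {a b : Γ} (h : a = b) :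
    ρ a = ρ b := by rw [h]

lemma isConjInv_of_mem {K : Subgroup G} (ρ : Representation k ↥K V) {g : G} (hg : g ∈ K) :
    IsConjInv K ρ g := by
  have hmul : ∀ (a b : ↥K), a * b = 1 → (ρ a).comp (ρ b) = LinearMap.id := by
    intro a b hab
    ext v
    rw [LinearMap.comp_apply, ← Module.End.mul_apply, ← map_mul, hab, map_one,
      Module.End.one_apply, LinearMap.id_apply]
  refine ⟨LinearEquiv.ofLinear (ρ ⟨g, hg⟩) (ρ ⟨g⁻¹, K.inv_mem hg⟩)
    (hmul _ _ (Subtype.ext (by push_cast; group))) (hmul _ _ (Subtype.ext (by push_cast; group))), ?_⟩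
  intro x hx hx' v
  simp only [LinearEquiv.ofLinear_apply]
  rw [← Module.End.mul_apply, ← Module.End.mul_apply, ← map_mul, ← map_mul]
  exact congrFun (congrArg _ (rep_congr ρ (Subtype.ext (by push_cast; group)))) v

/-- The full stabilizer of (the isomorphism class of) `ρ` inside the normalizer of `K`. -/
def fullStab (K : Subgroup G) (ρ : Representation k ↥K V) : Subgroup G :=
  stabilizerIn (Subgroup.normalizer (K : Set G)) K
    (fun g hg x hx => (Subgroup.mem_normalizer_iff.mp hg x).mp hx) ρ

lemma mem_fullStab {K : Subgroup G} {ρ : Representation k ↥K V} {g : G} :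
    g ∈ fullStab K ρ ↔ g ∈ (Subgroup.normalizer (K : Set G)) ∧ IsConjInv K ρ g := Iff.rfl

lemma mem_normalizer_of_maps {K : Subgroup G} {g : G}
    (h1 : ∀ x ∈ K, g * x * g⁻¹ ∈ K) (h2 : ∀ x ∈ K, g⁻¹ * x * g ∈ K) : g ∈ (Subgroup.normalizer (K : Set G)) := by
  rw [Subgroup.mem_normalizer_iff]
  intro x
  refine ⟨h1 x, fun hx => ?_⟩
  have h3 := h2 _ hx
  have h4 : g⁻¹ * (g * x * g⁻¹) * g = x := by group
  rwa [h4] at h3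

/-- Schur: a nonzero equivariant map between simple representations is bijective. -/
lemma schur_bijective {Γ : Type u} [Group Γ] (ρ : Representation k Γ V)
    (σ : Representation k Γ W) (hρ : RepIsSimple ρ) (hσ : RepIsSimple σ) (T : V →ₗ[k] W)
    (hT : ∀ g v, T (ρ g v) = σ g (T v)) (h0 : T ≠ 0) : Function.Bijective T := by
  constructor
  · rw [← LinearMap.ker_eq_bot (M := V)]
    rcases hρ.2 (LinearMap.ker T) (fun g v hv => by
      rw [LinearMap.mem_ker] at hv ⊢
      rw [hT, hv, map_zero]) with h | h
    · exact h
    · exact absurd (LinearMap.ker_eq_top.mp h) h0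
  · rw [← LinearMap.range_eq_top (f := T)]
    rcases hσ.2 (LinearMap.range T) (fun g w hw => by
      obtain ⟨v, rfl⟩ := hw
      exact ⟨ρ g v, hT g v⟩) with h | h
    · exact absurd (LinearMap.range_eq_bot.mp h) h0
    · exact h

/-- Schur: an equivariant endomorphism of a simple representation is a scalar. -/
lemma schur_scalar [IsAlgClosed k] {Γ : Type u} [Group Γ] [FiniteDimensional k V]
    (ρ : Representation k Γ V) (hρ : RepIsSimple ρ) (A : Module.End k V)
    (hA : ∀ g v, A (ρ g v) = ρ g (A v)) : ∃ μ : k, A = μ • (1 : Module.End k V) := by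
  haveI : Nontrivial V := hρ.1
  obtain ⟨μ, hμ⟩ := Module.End.exists_eigenvalue A
  refine ⟨μ, ?_⟩
  obtain ⟨v, hv⟩ := hμ.exists_hasEigenvector
  have hker : LinearMap.ker (A - μ • (1 : Module.End k V)) = ⊤ := by
    rcases hρ.2 (LinearMap.ker (A - μ • (1 : Module.End k V))) (fun g w hw => by
      rw [LinearMap.mem_ker] at hw ⊢
      have h1 : (A - μ • (1 : Module.End k V)) (ρ g w)
          = ρ g ((A - μ • (1 : Module.End k V)) w) := by
        simp only [LinearMap.sub_apply, LinearMap.smul_apply, Module.End.one_apply, hA,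
          map_sub, map_smul]
      rw [h1, hw, map_zero]) with h | h
    · exfalso
      apply hv.2
      have hv1 : (A - μ • (1 : Module.End k V)) v = 0 := by
        simp only [LinearMap.sub_apply, LinearMap.smul_apply, Module.End.one_apply,
          hv.apply_eq_smul, sub_self]
      have := h ▸ (LinearMap.mem_ker.mpr hv1)
      simpa using this
    · exact h
  ext w
  have := LinearMap.mem_ker.mp (hker ▸ Submodule.mem_top (x := w))
  simp only [LinearMap.sub_apply, LinearMap.smul_apply, Module.End.one_apply, sub_eq_zero] at this
  simpa using this

/-- The conjugation homomorphism of a subgroup. -/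
def conjHom {K : Subgroup G} (c : G) (hc : ∀ x ∈ K, c * x * c⁻¹ ∈ K) : ↥K →* ↥K where
  toFun x := ⟨c * x * c⁻¹, hc x x.2⟩
  map_one' := Subtype.ext (by simp)
  map_mul' x y := Subtype.ext (by push_cast; group)

/-- The conjugate representation. -/
def conjRep {K : Subgroup G} (ρ : Representation k ↥K V) (c : G)
    (hc : ∀ x ∈ K, c * x * c⁻¹ ∈ K) : Representation k ↥K V :=
  MonoidHom.comp ρ (conjHom c hc)

lemma conjRep_apply {K : Subgroup G} (ρ : Representation k ↥K V) (c : G)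
    (hc : ∀ x ∈ K, c * x * c⁻¹ ∈ K) (x : ↥K) :
    conjRep ρ c hc x = ρ ⟨c * x * c⁻¹, hc x x.2⟩ := rfl

lemma conjRep_isSimple {K : Subgroup G} (ρ : Representation k ↥K V) (c : G)
    (hc : ∀ x ∈ K, c * x * c⁻¹ ∈ K) (hc' : ∀ x ∈ K, c⁻¹ * x * c ∈ K)
    (hρ : RepIsSimple ρ) : RepIsSimple (conjRep ρ c hc) := by
  refine ⟨hρ.1, fun p hp => hρ.2 p (fun g v hv => ?_)⟩
  have h1 : ρ g = conjRep ρ c hc ⟨c⁻¹ * g * c, hc' g g.2⟩ := by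
    rw [conjRep_apply]
    exact rep_congr ρ (Subtype.ext (by group))
  rw [h1]
  exact hp _ v hv

/-- Simplicity transfers across an equivariant isomorphism. -/
lemma repIsSimple_of_iso {Γ : Type u} [Group Γ] (ρ : Representation k Γ V)
    (σ : Representation k Γ W) (e : V ≃ₗ[k] W) (he : ∀ g v, e (ρ g v) = σ g (e v))
    (hρ : RepIsSimple ρ) : RepIsSimple σ := by
  haveI : Nontrivial V := hρ.1
  refine ⟨e.symm.toEquiv.nontrivial, fun p hp => ?_⟩
  have hinv : ∀ (g : Γ) (v : V), v ∈ p.comap (e : V →ₗ[k] W) → ρ g v ∈ p.comap (e : V →ₗ[k] W) := by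
    intro g v hv
    simp only [Submodule.mem_comap, LinearEquiv.coe_coe] at hv ⊢
    rw [he]
    exact hp g _ hv
  have hmap : p = Submodule.map (e : V →ₗ[k] W) (p.comap (e : V →ₗ[k] W)) :=
    (Submodule.map_comap_eq_of_surjective e.surjective p).symm
  rcases hρ.2 _ hinv with h | h
  · left; rw [hmap, h, Submodule.map_bot]
  · right; rw [hmap, h, Submodule.map_top, LinearEquiv.range]

end Stmt6
namespace Stmt6
section Setting

attribute [local instance] Classical.propDecidable

variable (N H : Subgroup G)
variable (hMN : ∀ g ∈ N, ∀ x ∈ N ⊓ H, g * x * g⁻¹ ∈ N ⊓ H)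
variable (hHN : ∀ g ∈ H, ∀ x ∈ N, g * x * g⁻¹ ∈ N)
variable (hHM : ∀ g ∈ H, ∀ x ∈ N ⊓ H, g * x * g⁻¹ ∈ N ⊓ H)
variable (hGN : ∀ g ∈ (⊤ : Subgroup G), ∀ x ∈ N, g * x * g⁻¹ ∈ N)
variable {Vχ Vξ Vφ : Type u}
variable [AddCommGroup Vχ] [Module k Vχ] [AddCommGroup Vξ] [Module k Vξ]
variable [AddCommGroup Vφ] [Module k Vφ]
variable (χ : Representation k ↥N Vχ) (ξ : Representation k ↥(N ⊓ H : Subgroup G) Vξ)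

section Memberships

lemma M_le_Nξ : N ⊓ H ≤ stabilizerIn N (N ⊓ H) hMN ξ :=
  fun m hm => ⟨(Subgroup.mem_inf.mp hm).1, isConjInv_of_mem ξ hm⟩

lemma M_le_Hχ : N ⊓ H ≤ stabilizerIn H N hHN χ :=
  fun m hm => ⟨(Subgroup.mem_inf.mp hm).2, isConjInv_of_mem χ (Subgroup.mem_inf.mp hm).1⟩

lemma N_le_Gχ : N ≤ stabilizerIn ⊤ N hGN χ :=
  fun n hn => ⟨Subgroup.mem_top n, isConjInv_of_mem χ hn⟩

lemma Hχ_le_Gχ : stabilizerIn H N hHN χ ≤ stabilizerIn ⊤ N hGN χ :=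
  fun g hg => ⟨Subgroup.mem_top g, hg.2⟩

lemma Hξ_le_fullStab : stabilizerIn H (N ⊓ H) hHM ξ ≤ fullStab (N ⊓ H) ξ := by
  rintro g ⟨hgH, hgc⟩
  refine ⟨mem_normalizer_of_maps (hHM g hgH) (fun x hx => ?_), hgc⟩
  have := hHM g⁻¹ (H.inv_mem hgH) x hx
  rwa [inv_inv] at this

lemma Nξ_le_fullStab : stabilizerIn N (N ⊓ H) hMN ξ ≤ fullStab (N ⊓ H) ξ := by
  rintro g ⟨hgN, hgc⟩
  refine ⟨mem_normalizer_of_maps (hMN g hgN) (fun x hx => ?_), hgc⟩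
  have := hMN g⁻¹ (N.inv_mem hgN) x hx
  rwa [inv_inv] at this

include hHN in
lemma Hξ_norm_Nξ {g n : G} (hg : g ∈ stabilizerIn H (N ⊓ H) hHM ξ)
    (hn : n ∈ stabilizerIn N (N ⊓ H) hMN ξ) :
    g * n * g⁻¹ ∈ stabilizerIn N (N ⊓ H) hMN ξ := by
  refine ⟨hHN g hg.1 n hn.1, ?_⟩
  have h1 : g * n * g⁻¹ ∈ fullStab (N ⊓ H) ξ :=
    Subgroup.mul_mem _ (Subgroup.mul_mem _ (Hξ_le_fullStab N H hHM ξ hg)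
      (Nξ_le_fullStab N H hMN ξ hn)) (Subgroup.inv_mem _ (Hξ_le_fullStab N H hHM ξ hg))
  exact h1.2

lemma Nξ_le_N : stabilizerIn N (N ⊓ H) hMN ξ ≤ N := fun _ hg => hg.1

end Memberships

section Jmap

variable (φ : Representation k ↥(stabilizerIn N (N ⊓ H) hMN ξ) Vφ)

/-- Evaluation of an induced-module element at a point of `N`. -/
def evalMap (x : ↥N) :
    ↥(indCarrier (Subgroup.inclusion (stabilizerIn_le N (N ⊓ H) hMN ξ)) φ) →ₗ[k] Vφ where
  toFun f := f.1 x
  map_add' _ _ := rfl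
  map_smul' _ _ := rfl

lemma Jfun_mem (v : Vφ) :
    (fun x : ↥N => if hx : (x : G) ∈ stabilizerIn N (N ⊓ H) hMN ξ then φ ⟨x, hx⟩ v else 0)
      ∈ indCarrier (Subgroup.inclusion (stabilizerIn_le N (N ⊓ H) hMN ξ)) φ := by
  intro h x
  beta_reduce
  by_cases hx : (x : G) ∈ stabilizerIn N (N ⊓ H) hMN ξ
  · have hhx : ((Subgroup.inclusion (stabilizerIn_le N (N ⊓ H) hMN ξ) h * x : ↥N) : G)
        ∈ stabilizerIn N (N ⊓ H) hMN ξ := Subgroup.mul_mem _ h.2 hx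
    rw [dif_pos hx, dif_pos hhx, ← Module.End.mul_apply, ← map_mul]
    exact congrFun (congrArg _ (rep_congr φ (Subtype.ext rfl))) v
  · have hhx : ¬ ((Subgroup.inclusion (stabilizerIn_le N (N ⊓ H) hMN ξ) h * x : ↥N) : G)
        ∈ stabilizerIn N (N ⊓ H) hMN ξ := by
      intro hmem
      apply hx
      have h2 := Subgroup.mul_mem _ (Subgroup.inv_mem _ h.2) hmem
      have h3 : (h : G)⁻¹ * ((Subgroup.inclusion (stabilizerIn_le N (N ⊓ H) hMN ξ) h * x : ↥N) : G)
          = (x : G) := by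
        push_cast
        simp [Subgroup.coe_inclusion]
      rwa [h3] at h2
    rw [dif_neg hx, dif_neg hhx, map_zero]

/-- The embedding of `Vφ` into the induced module as the functions supported on `N_ξ`. -/
def Jmap : Vφ →ₗ[k] ↥(indCarrier (Subgroup.inclusion (stabilizerIn_le N (N ⊓ H) hMN ξ)) φ) where
  toFun v := ⟨fun x : ↥N => if hx : (x : G) ∈ stabilizerIn N (N ⊓ H) hMN ξ
      then φ ⟨x, hx⟩ v else 0, Jfun_mem N H hMN ξ φ v⟩
  map_add' v w := by
    ext x
    by_cases hx : (x : G) ∈ stabilizerIn N (N ⊓ H) hMN ξ <;>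
      simp [hx]
  map_smul' c v := by
    ext x
    by_cases hx : (x : G) ∈ stabilizerIn N (N ⊓ H) hMN ξ <;>
      simp [hx]

lemma Jmap_apply (v : Vφ) (x : ↥N) :
    (Jmap N H hMN ξ φ v).1 x = if hx : (x : G) ∈ stabilizerIn N (N ⊓ H) hMN ξ
      then φ ⟨x, hx⟩ v else 0 := rfl

lemma Jmap_eval_one (v : Vφ) : (Jmap N H hMN ξ φ v).1 1 = v := by
  have h0 : ((1 : ↥N) : G) ∈ stabilizerIn N (N ⊓ H) hMN ξ := by
    rw [OneMemClass.coe_one]; exact Subgroup.one_mem _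
  rw [Jmap_apply, dif_pos h0]
  have h1 : (⟨((1 : ↥N) : G), h0⟩ : ↥(stabilizerIn N (N ⊓ H) hMN ξ)) = 1 :=
    Subtype.ext (by simp)
  rw [h1, map_one]
  rfl

/-- An induced-module element supported on `N_ξ` is in the image of `Jmap`. -/
lemma Jmap_of_supported
    (f : ↥(indCarrier (Subgroup.inclusion (stabilizerIn_le N (N ⊓ H) hMN ξ)) φ))
    (hf : ∀ x : ↥N, (x : G) ∉ stabilizerIn N (N ⊓ H) hMN ξ → f.1 x = 0) :
    Jmap N H hMN ξ φ (f.1 1) = f := by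
  apply Subtype.ext
  funext x
  rw [Jmap_apply]
  by_cases hx : (x : G) ∈ stabilizerIn N (N ⊓ H) hMN ξ
  · rw [dif_pos hx]
    have h2 := f.2 ⟨(x : G), hx⟩ 1
    have h3 : (Subgroup.inclusion (stabilizerIn_le N (N ⊓ H) hMN ξ) ⟨(x : G), hx⟩ * 1 : ↥N)
        = x := Subtype.ext (by simp [Subgroup.coe_inclusion])
    rw [h3] at h2
    rw [h2]
  · rw [dif_neg hx, hf x hx]

/-- `Jmap` is `N_ξ`-equivariant. -/
lemma Jmap_equivariant (n : ↥(stabilizerIn N (N ⊓ H) hMN ξ)) (v : Vφ) :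
    Jmap N H hMN ξ φ (φ n v)
      = indRep (Subgroup.inclusion (stabilizerIn_le N (N ⊓ H) hMN ξ)) φ
          (Subgroup.inclusion (stabilizerIn_le N (N ⊓ H) hMN ξ) n) (Jmap N H hMN ξ φ v) := by
  apply Subtype.ext
  funext x
  have hco : ((x * Subgroup.inclusion (stabilizerIn_le N (N ⊓ H) hMN ξ) n : ↥N) : G)
      = (x : G) * (n : G) := by simp [Subgroup.coe_inclusion]
  show (Jmap N H hMN ξ φ (φ n v)).1 x
      = (Jmap N H hMN ξ φ v).1 (x * Subgroup.inclusion (stabilizerIn_le N (N ⊓ H) hMN ξ) n)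
  rw [Jmap_apply, Jmap_apply]
  by_cases hx : (x : G) ∈ stabilizerIn N (N ⊓ H) hMN ξ
  · have hx2 : ((x * Subgroup.inclusion (stabilizerIn_le N (N ⊓ H) hMN ξ) n : ↥N) : G)
        ∈ stabilizerIn N (N ⊓ H) hMN ξ := by
      rw [hco]; exact Subgroup.mul_mem _ hx n.2
    rw [dif_pos hx, dif_pos hx2, ← Module.End.mul_apply, ← map_mul]
    exact congrFun (congrArg _ (rep_congr φ (Subtype.ext (by rw [hco]; rfl)))) v
  · have hx2 : ¬ ((x * Subgroup.inclusion (stabilizerIn_le N (N ⊓ H) hMN ξ) n : ↥N) : G)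
        ∈ stabilizerIn N (N ⊓ H) hMN ξ := by
      rw [hco]
      intro hmem
      apply hx
      have h2 := Subgroup.mul_mem _ hmem (Subgroup.inv_mem _ n.2)
      rwa [mul_inv_cancel_right] at h2
    rw [dif_neg hx, dif_neg hx2]

end Jmap
end Setting
end Stmt6
namespace Stmt6
section Vanish

attribute [local instance] Classical.propDecidable

variable (N H : Subgroup G)
variable (hMN : ∀ g ∈ N, ∀ x ∈ N ⊓ H, g * x * g⁻¹ ∈ N ⊓ H)
variable {Vχ Vξ Vφ : Type u}
variable [AddCommGroup Vχ] [Module k Vχ] [AddCommGroup Vξ] [Module k Vξ]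
variable [AddCommGroup Vφ] [Module k Vφ]
variable (χ : Representation k ↥N Vχ) (ξ : Representation k ↥(N ⊓ H : Subgroup G) Vξ)
variable (φ : Representation k ↥(stabilizerIn N (N ⊓ H) hMN ξ) Vφ)

local notation "Nξ" => stabilizerIn N (N ⊓ H) hMN ξ
local notation "ιξ" => Subgroup.inclusion (stabilizerIn_le N (N ⊓ H) hMN ξ)
local notation "ρInd" => indRep (Subgroup.inclusion (stabilizerIn_le N (N ⊓ H) hMN ξ)) φ

lemma vanish (hξs : RepIsSimple ξ)
    (hres : RestrictIsoDep (N ⊓ H) (stabilizerIn N (N ⊓ H) hMN ξ) ξ φ)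
    (c : G)
    (hcM : ∀ m ∈ N ⊓ H, c * m * c⁻¹ ∈ N ⊓ H)
    (hcM' : ∀ m ∈ N ⊓ H, c⁻¹ * m * c ∈ N ⊓ H)
    (hcξ : IsConjInv (N ⊓ H) ξ c)
    (A : ↥(indCarrier (Subgroup.inclusion (stabilizerIn_le N (N ⊓ H) hMN ξ)) φ) →ₗ[k] ↥(indCarrier (Subgroup.inclusion (stabilizerIn_le N (N ⊓ H) hMN ξ)) φ))
    (hA : ∀ (m : G) (hm : m ∈ N ⊓ H) (f : ↥(indCarrier (Subgroup.inclusion (stabilizerIn_le N (N ⊓ H) hMN ξ)) φ)),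
      A (ρInd ⟨m, (Subgroup.mem_inf.mp hm).1⟩ f)
        = ρInd ⟨c * m * c⁻¹, (Subgroup.mem_inf.mp (hcM m hm)).1⟩ (A f))
    (f : ↥(indCarrier (Subgroup.inclusion (stabilizerIn_le N (N ⊓ H) hMN ξ)) φ)) (hf : ∀ x : ↥N, (x : G) ∉ Nξ → f.1 x = 0)
    (x : ↥N) (hx : (x : G) ∉ Nξ) : (A f).1 x = 0 := by
  obtain ⟨eξ, heξ⟩ := hres
  obtain ⟨eg, heg⟩ := hcξ
  have key : ∀ w : Vφ, (A (Jmap N H hMN ξ φ w)).1 x = 0 := by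
    set S' : Vξ →ₗ[k] ↥(indCarrier (Subgroup.inclusion (stabilizerIn_le N (N ⊓ H) hMN ξ)) φ) :=
      A ∘ₗ (Jmap N H hMN ξ φ) ∘ₗ (eξ : Vξ →ₗ[k] Vφ) ∘ₗ (eg.symm : Vξ →ₗ[k] Vξ) with hS'def
    -- `S'` is a genuine `M`-equivariant map into the induced module
    have hS'equiv : ∀ (m : G) (hm : m ∈ N ⊓ H) (v : Vξ),
        S' (ξ ⟨m, hm⟩ v) = ρInd ⟨m, (Subgroup.mem_inf.mp hm).1⟩ (S' v) := by
      intro m hm v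
      have hm0 : c⁻¹ * m * c ∈ N ⊓ H := hcM' m hm
      -- step 1 : untwist by `eg.symm`
      have hmm : c * (c⁻¹ * m * c) * c⁻¹ = m := by group
      have hstep1 : eg.symm (ξ ⟨m, hm⟩ v) = ξ ⟨c⁻¹ * m * c, hm0⟩ (eg.symm v) := by
        have h1 := heg (c⁻¹ * m * c) hm0 (by rw [hmm]; exact hm) (eg.symm v)
        have h2 : (⟨c * (c⁻¹ * m * c) * c⁻¹, by rw [hmm]; exact hm⟩ : ↥(N ⊓ H)) = ⟨m, hm⟩ :=
          Subtype.ext hmm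
        rw [h2, eg.apply_symm_apply] at h1
        rw [← h1, eg.symm_apply_apply]
      -- step 2 : transport through `eξ`
      have hstep2 : ∀ u : Vξ, eξ (ξ ⟨c⁻¹ * m * c, hm0⟩ u)
          = φ ⟨c⁻¹ * m * c, M_le_Nξ N H hMN ξ hm0⟩ (eξ u) :=
        fun u => heξ (c⁻¹ * m * c) hm0 (M_le_Nξ N H hMN ξ hm0) u
      -- step 3 : `Jmap` equivariance
      have hstep3 : ∀ u : Vφ, Jmap N H hMN ξ φ (φ ⟨c⁻¹ * m * c, M_le_Nξ N H hMN ξ hm0⟩ u)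
          = ρInd ⟨c⁻¹ * m * c, (Subgroup.mem_inf.mp hm0).1⟩ (Jmap N H hMN ξ φ u) := by
        intro u
        rw [Jmap_equivariant]
        exact congrFun (congrArg _ (rep_congr ρInd (Subtype.ext rfl))) _
      -- step 4 : apply `hA`
      have hstep4 : ∀ fw : ↥(indCarrier (Subgroup.inclusion (stabilizerIn_le N (N ⊓ H) hMN ξ)) φ), A (ρInd ⟨c⁻¹ * m * c, (Subgroup.mem_inf.mp hm0).1⟩ fw)
          = ρInd ⟨m, (Subgroup.mem_inf.mp hm).1⟩ (A fw) := by
        intro fw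
        have h4 := hA (c⁻¹ * m * c) hm0 fw
        have h5 : (⟨c * (c⁻¹ * m * c) * c⁻¹, (Subgroup.mem_inf.mp (hcM _ hm0)).1⟩ : ↥N)
            = ⟨m, (Subgroup.mem_inf.mp hm).1⟩ := Subtype.ext hmm
        rwa [h5] at h4
      simp only [hS'def, LinearMap.comp_apply, LinearEquiv.coe_coe]
      rw [hstep1, hstep2, hstep3, hstep4]
    set T : Vξ →ₗ[k] Vφ := (evalMap N H hMN ξ φ x) ∘ₗ S' with hTdef
    set R : Vξ →ₗ[k] Vξ := (eξ.symm : Vφ →ₗ[k] Vξ) ∘ₗ T with hRdef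
    have hxM : ∀ m ∈ N ⊓ H, (x : G) * m * (x : G)⁻¹ ∈ N ⊓ H := hMN x x.2
    have hxM' : ∀ m ∈ N ⊓ H, (x : G)⁻¹ * m * (x : G) ∈ N ⊓ H := fun m hm => by
      have := hMN (x : G)⁻¹ (N.inv_mem x.2) m hm
      rwa [inv_inv] at this
    have hRequiv : ∀ (m : ↥(N ⊓ H)) (v : Vξ),
        R (ξ m v) = conjRep ξ (x : G) hxM m (R v) := by
      intro m v
      have hTv : T (ξ m v) = φ ⟨(x : G) * m * (x : G)⁻¹,
          M_le_Nξ N H hMN ξ (hxM m m.2)⟩ (T v) := by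
        have h1 : T (ξ m v) = (S' (ξ m v)).1 x := rfl
        have h2 := hS'equiv m m.2 v
        have h3 : (ξ ⟨(m : G), m.2⟩ v) = ξ m v := by
          exact congrFun (congrArg _ (rep_congr ξ (Subtype.ext rfl))) v
        rw [h3] at h2
        rw [h1, h2]
        -- (ρInd ⟨m⟩ (S' v)).1 x = (S' v).1 (x * ⟨m⟩)
        have h4 : (ρInd ⟨(m : G), (Subgroup.mem_inf.mp m.2).1⟩ (S' v)).1 x
            = (S' v).1 (x * ⟨(m : G), (Subgroup.mem_inf.mp m.2).1⟩) := rfl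
        rw [h4]
        have h5 : (x * (⟨(m : G), (Subgroup.mem_inf.mp m.2).1⟩ : ↥N) : ↥N)
            = ιξ ⟨(x : G) * m * (x : G)⁻¹, M_le_Nξ N H hMN ξ (hxM m m.2)⟩ * x := by
          apply Subtype.ext
          push_cast [Subgroup.coe_inclusion]
          group
        rw [h5]
        exact (S' v).2 ⟨(x : G) * m * (x : G)⁻¹, M_le_Nξ N H hMN ξ (hxM m m.2)⟩ x
      have h6 : eξ.symm (φ ⟨(x : G) * m * (x : G)⁻¹, M_le_Nξ N H hMN ξ (hxM m m.2)⟩ (T v))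
          = ξ ⟨(x : G) * m * (x : G)⁻¹, hxM m m.2⟩ (eξ.symm (T v)) := by
        have h7 := heξ ((x : G) * m * (x : G)⁻¹) (hxM m m.2)
          (M_le_Nξ N H hMN ξ (hxM m m.2)) (eξ.symm (T v))
        rw [eξ.apply_symm_apply] at h7
        rw [← h7, eξ.symm_apply_apply]
      show eξ.symm (T (ξ m v)) = _
      rw [hTv, h6]
      rw [conjRep_apply]
      exact congrFun (congrArg _ (rep_congr ξ (Subtype.ext rfl))) _
    have hT0 : T = 0 := by
      by_contra hT
      have hR : R ≠ 0 := by
        intro h0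
        apply hT
        ext v
        have h1 : T v = eξ (R v) := by
          rw [hRdef]
          simp only [LinearMap.comp_apply, LinearEquiv.coe_coe, eξ.apply_symm_apply]
        rw [h1, h0]
        simp
      have hbij := schur_bijective ξ (conjRep ξ (x : G) hxM) hξs
        (conjRep_isSimple ξ (x : G) hxM hxM' hξs) R hRequiv hR
      apply hx
      refine ⟨x.2, LinearEquiv.ofBijective R hbij, ?_⟩
      intro m hm hm' v
      have h1 := hRequiv ⟨m, hm⟩ v
      rw [conjRep_apply] at h1
      simp only [LinearEquiv.ofBijective_apply]
      rw [h1]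
    intro w
    have h5 : S' (eg (eξ.symm w)) = A (Jmap N H hMN ξ φ w) := by
      rw [hS'def]
      simp only [LinearMap.comp_apply, LinearEquiv.coe_coe, eg.symm_apply_apply,
        eξ.apply_symm_apply]
    have h6 : (A (Jmap N H hMN ξ φ w)).1 x = T (eg (eξ.symm w)) := by
      rw [← h5]; rfl
    rw [h6, hT0]
    simp
  have h7 : f = Jmap N H hMN ξ φ (f.1 1) := (Jmap_of_supported N H hMN ξ φ f hf).symm
  rw [h7]
  exact key _

end Vanish
end Stmt6
namespace Stmt6
section PartI

attribute [local instance] Classical.propDecidable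

variable (N H : Subgroup G)
variable (hMN : ∀ g ∈ N, ∀ x ∈ N ⊓ H, g * x * g⁻¹ ∈ N ⊓ H)
variable (hHN : ∀ g ∈ H, ∀ x ∈ N, g * x * g⁻¹ ∈ N)
variable (hHM : ∀ g ∈ H, ∀ x ∈ N ⊓ H, g * x * g⁻¹ ∈ N ⊓ H)
variable {Vχ Vξ Vφ : Type u}
variable [AddCommGroup Vχ] [Module k Vχ] [AddCommGroup Vξ] [Module k Vξ]
variable [AddCommGroup Vφ] [Module k Vφ]
variable (χ : Representation k ↥N Vχ) (ξ : Representation k ↥(N ⊓ H : Subgroup G) Vξ)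
variable (φ : Representation k ↥(stabilizerIn N (N ⊓ H) hMN ξ) Vφ)

local notation "Nξ" => stabilizerIn N (N ⊓ H) hMN ξ
local notation "ιξ" => Subgroup.inclusion (stabilizerIn_le N (N ⊓ H) hMN ξ)
local notation "ρInd" => indRep (Subgroup.inclusion (stabilizerIn_le N (N ⊓ H) hMN ξ)) φ

include hHN hHM in
/-- Part (i), forward inclusion: an element of `H_χ` fixes the isomorphism class of `φ`. -/
lemma isConjInv_phi_of_mem_Hχ
    (hξs : RepIsSimple ξ)
    (hres : RestrictIsoDep (N ⊓ H) (stabilizerIn N (N ⊓ H) hMN ξ) ξ φ)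
    (hind : IsRepIso χ (indRep (Subgroup.inclusion (stabilizerIn_le N (N ⊓ H) hMN ξ)) φ))
    (hHχξ : stabilizerIn H N hHN χ ≤ stabilizerIn H (N ⊓ H) hHM ξ)
    {g : G} (hg : g ∈ stabilizerIn H N hHN χ) :
    IsConjInv (stabilizerIn N (N ⊓ H) hMN ξ) φ g := by
  obtain ⟨eχ, heχ⟩ := hind
  obtain ⟨eg, heg⟩ := hg.2
  have hgξ : g ∈ stabilizerIn H (N ⊓ H) hHM ξ := hHχξ hg
  have hgH : g ∈ H := hg.1
  -- transport the self-intertwiner of χ to the induced module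
  set E : ↥(indCarrier ιξ φ) ≃ₗ[k] ↥(indCarrier ιξ φ) := (eχ.symm.trans eg).trans eχ with hEdef
  set E2 : ↥(indCarrier ιξ φ) ≃ₗ[k] ↥(indCarrier ιξ φ) :=
    (eχ.symm.trans eg.symm).trans eχ with hE2def
  have hE : ∀ (n : G) (hn : n ∈ N) (hn' : g * n * g⁻¹ ∈ N) (f : ↥(indCarrier ιξ φ)),
      E (ρInd ⟨n, hn⟩ f) = ρInd ⟨g * n * g⁻¹, hn'⟩ (E f) := by
    intro n hn hn' f
    have h1 : ρInd ⟨n, hn⟩ f = eχ (χ ⟨n, hn⟩ (eχ.symm f)) := by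
      rw [heχ, eχ.apply_symm_apply]
    simp only [hEdef, LinearEquiv.trans_apply]
    rw [h1, eχ.symm_apply_apply, heg n hn hn', heχ]
  have hE2 : ∀ (n : G) (hn : n ∈ N) (hn' : g⁻¹ * n * g ∈ N) (f : ↥(indCarrier ιξ φ)),
      E2 (ρInd ⟨n, hn⟩ f) = ρInd ⟨g⁻¹ * n * g, hn'⟩ (E2 f) := by
    intro n hn hn' f
    have h1 : ρInd ⟨n, hn⟩ f = eχ (χ ⟨n, hn⟩ (eχ.symm f)) := by
      rw [heχ, eχ.apply_symm_apply]
    have h2 : ∀ w, eg.symm (χ ⟨n, hn⟩ w) = χ ⟨g⁻¹ * n * g, hn'⟩ (eg.symm w) := by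
      intro w
      have hmm : g * (g⁻¹ * n * g) * g⁻¹ = n := by group
      have hmem : g * (g⁻¹ * n * g) * g⁻¹ ∈ N := by rw [hmm]; exact hn
      have h3 := heg (g⁻¹ * n * g) hn' hmem (eg.symm w)
      have h5 : (⟨g * (g⁻¹ * n * g) * g⁻¹, hmem⟩ : ↥N) = ⟨n, hn⟩ := Subtype.ext hmm
      rw [h5, eg.apply_symm_apply] at h3
      rw [← h3, eg.symm_apply_apply]
    simp only [hE2def, LinearEquiv.trans_apply]
    rw [h1, eχ.symm_apply_apply, h2, heχ]
  have hEE2 : ∀ f, E (E2 f) = f := by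
    intro f
    simp only [hEdef, hE2def, LinearEquiv.trans_apply, eχ.symm_apply_apply,
      eg.apply_symm_apply, eχ.apply_symm_apply]
  have hE2E : ∀ f, E2 (E f) = f := by
    intro f
    simp only [hEdef, hE2def, LinearEquiv.trans_apply, eχ.symm_apply_apply,
      eg.symm_apply_apply, eχ.apply_symm_apply]
  -- E and E2 map the `N_ξ`-supported part to itself
  have hvanE : ∀ (f : ↥(indCarrier ιξ φ)), (∀ x : ↥N, (x : G) ∉ Nξ → f.1 x = 0) →
      ∀ x : ↥N, (x : G) ∉ Nξ → (E f).1 x = 0 := by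
    intro f hf x hx
    refine vanish N H hMN ξ φ hξs hres g (hHM g hgH) (fun m hm => by
      have := hHM g⁻¹ (H.inv_mem hgH) m hm; rwa [inv_inv] at this) hgξ.2
      E.toLinearMap (fun m hm f' => ?_) f hf x hx
    exact hE m (Subgroup.mem_inf.mp hm).1 _ f'
  have hvanE2 : ∀ (f : ↥(indCarrier ιξ φ)), (∀ x : ↥N, (x : G) ∉ Nξ → f.1 x = 0) →
      ∀ x : ↥N, (x : G) ∉ Nξ → (E2 f).1 x = 0 := by
    intro f hf x hx
    refine vanish N H hMN ξ φ hξs hres g⁻¹ (hHM g⁻¹ (H.inv_mem hgH)) (fun m hm => by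
      rw [inv_inv]; exact hHM g hgH m hm) ((stabilizerIn H (N ⊓ H) hHM ξ).inv_mem hgξ).2
      E2.toLinearMap (fun m hm f' => ?_) f hf x hx
    have h1 := hE2 m (Subgroup.mem_inf.mp hm).1
      (by have := hHN g⁻¹ (H.inv_mem hgH) m (Subgroup.mem_inf.mp hm).1; rwa [inv_inv] at this) f'
    exact h1.trans (congrFun (congrArg _ (rep_congr ρInd (Subtype.ext (by group)))) _)
  have hJsupp : ∀ v : Vφ, ∀ x : ↥N, (x : G) ∉ Nξ → (Jmap N H hMN ξ φ v).1 x = 0 := by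
    intro v x hx
    rw [Jmap_apply, dif_neg hx]
  -- the conjugating equivalence on Vφ
  set F : Vφ →ₗ[k] Vφ :=
    (evalMap N H hMN ξ φ 1) ∘ₗ E.toLinearMap ∘ₗ (Jmap N H hMN ξ φ) with hFdef
  set F2 : Vφ →ₗ[k] Vφ :=
    (evalMap N H hMN ξ φ 1) ∘ₗ E2.toLinearMap ∘ₗ (Jmap N H hMN ξ φ) with hF2def
  have hJE : ∀ v : Vφ, Jmap N H hMN ξ φ ((E (Jmap N H hMN ξ φ v)).1 1)
      = E (Jmap N H hMN ξ φ v) :=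
    fun v => Jmap_of_supported N H hMN ξ φ _ (hvanE _ (hJsupp v))
  have hJE2 : ∀ v : Vφ, Jmap N H hMN ξ φ ((E2 (Jmap N H hMN ξ φ v)).1 1)
      = E2 (Jmap N H hMN ξ φ v) :=
    fun v => Jmap_of_supported N H hMN ξ φ _ (hvanE2 _ (hJsupp v))
  have hFF2 : ∀ v, F (F2 v) = v := by
    intro v
    simp only [hFdef, hF2def, LinearMap.comp_apply]
    show (E (Jmap N H hMN ξ φ ((E2 (Jmap N H hMN ξ φ v)).1 1))).1 1 = v
    rw [hJE2, hEE2, Jmap_eval_one]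
  have hF2F : ∀ v, F2 (F v) = v := by
    intro v
    simp only [hFdef, hF2def, LinearMap.comp_apply]
    show (E2 (Jmap N H hMN ξ φ ((E (Jmap N H hMN ξ φ v)).1 1))).1 1 = v
    rw [hJE, hE2E, Jmap_eval_one]
  refine ⟨LinearEquiv.ofLinear F F2 (by ext v; exact hFF2 v) (by ext v; exact hF2F v), ?_⟩
  intro n hn hn' v
  simp only [LinearEquiv.ofLinear_apply, hFdef, LinearMap.comp_apply]
  show (E (Jmap N H hMN ξ φ (φ ⟨n, hn⟩ v))).1 1 = φ ⟨g * n * g⁻¹, hn'⟩ ((E (Jmap N H hMN ξ φ v)).1 1)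
  rw [Jmap_equivariant]
  have h1 : ιξ ⟨n, hn⟩ = (⟨n, (stabilizerIn_le N (N ⊓ H) hMN ξ) hn⟩ : ↥N) := rfl
  rw [h1, hE n ((stabilizerIn_le N (N ⊓ H) hMN ξ) hn)
    ((stabilizerIn_le N (N ⊓ H) hMN ξ) hn')]
  show (E (Jmap N H hMN ξ φ v)).1
      (1 * ⟨g * n * g⁻¹, (stabilizerIn_le N (N ⊓ H) hMN ξ) hn'⟩) = _
  have h2 : ((1 : ↥N) * ⟨g * n * g⁻¹, (stabilizerIn_le N (N ⊓ H) hMN ξ) hn'⟩ : ↥N)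
      = ιξ ⟨g * n * g⁻¹, hn'⟩ * 1 := Subtype.ext (by
        push_cast [Subgroup.coe_inclusion]
        group)
  rw [h2]
  exact (E (Jmap N H hMN ξ φ v)).2 ⟨g * n * g⁻¹, hn'⟩ 1

include hHN hHM in
/-- Part (i), reverse inclusion. -/
lemma isConjInv_chi_of_mem_Hφ
    (hind : IsRepIso χ (indRep (Subgroup.inclusion (stabilizerIn_le N (N ⊓ H) hMN ξ)) φ))
    {g : G} (hgξ : g ∈ stabilizerIn H (N ⊓ H) hHM ξ)
    (hgφ : IsConjInv (stabilizerIn N (N ⊓ H) hMN ξ) φ g) :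
    IsConjInv N χ g := by
  obtain ⟨eφ, heφ⟩ := hgφ
  obtain ⟨eχ, heχ⟩ := hind
  have hgH : g ∈ H := hgξ.1
  have hmemd : ∀ x : G, x ∈ N → g⁻¹ * x * g ∈ N := fun x hx => by
    have := hHN g⁻¹ (H.inv_mem hgH) x hx; rwa [inv_inv] at this
  have hmemu : ∀ x : G, x ∈ N → g * x * g⁻¹ ∈ N := fun x hx => hHN g hgH x hx
  have hconjNξ : ∀ n ∈ Nξ, g * n * g⁻¹ ∈ Nξ :=
    fun n hn => Hξ_norm_Nξ N H hMN hHN hHM ξ hgξ hn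
  have hconjNξ' : ∀ n ∈ Nξ, g⁻¹ * n * g ∈ Nξ := fun n hn => by
    have := Hξ_norm_Nξ N H hMN hHN hHM ξ
      ((stabilizerIn H (N ⊓ H) hHM ξ).inv_mem hgξ) hn
    rwa [inv_inv] at this
  -- conjugation by eφ commutes right: e.symm direction
  have heφ' : ∀ (n : G) (hn : n ∈ Nξ) (hn' : g⁻¹ * n * g ∈ Nξ) (w : Vφ),
      eφ.symm (φ ⟨n, hn⟩ w) = φ ⟨g⁻¹ * n * g, hn'⟩ (eφ.symm w) := by
    intro n hn hn' w
    have hmm : g * (g⁻¹ * n * g) * g⁻¹ = n := by group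
    have hmem : g * (g⁻¹ * n * g) * g⁻¹ ∈ Nξ := by rw [hmm]; exact hn
    have h1 := heφ (g⁻¹ * n * g) hn' hmem (eφ.symm w)
    have h3 : (⟨g * (g⁻¹ * n * g) * g⁻¹, hmem⟩ : ↥Nξ) = ⟨n, hn⟩ := Subtype.ext hmm
    rw [h3, eφ.apply_symm_apply] at h1
    rw [← h1, eφ.symm_apply_apply]
  -- the two conjugation maps on the induced module
  have hmemEu : ∀ (f : ↥(indCarrier ιξ φ)),
      (fun x : ↥N => eφ (f.1 ⟨g⁻¹ * x * g, hmemd x x.2⟩)) ∈ indCarrier ιξ φ := by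
    intro f h x
    beta_reduce
    have hsplit : (⟨g⁻¹ * ((ιξ h * x : ↥N) : G) * g, hmemd _ (ιξ h * x).2⟩ : ↥N)
        = ιξ ⟨g⁻¹ * h * g, hconjNξ' h h.2⟩ * ⟨g⁻¹ * x * g, hmemd x x.2⟩ := by
      apply Subtype.ext
      push_cast [Subgroup.coe_inclusion]
      group
    rw [hsplit, f.2]
    rw [heφ (g⁻¹ * h * g) (hconjNξ' h h.2) (by
      have h2 : g * (g⁻¹ * (h : G) * g) * g⁻¹ = h := by group
      rw [h2]; exact h.2)]
    exact congrFun (congrArg _ (rep_congr φ (Subtype.ext (by group)))) _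
  have hmemEd : ∀ (f : ↥(indCarrier ιξ φ)),
      (fun x : ↥N => eφ.symm (f.1 ⟨g * x * g⁻¹, hmemu x x.2⟩)) ∈ indCarrier ιξ φ := by
    intro f h x
    beta_reduce
    have hsplit : (⟨g * ((ιξ h * x : ↥N) : G) * g⁻¹, hmemu _ (ιξ h * x).2⟩ : ↥N)
        = ιξ ⟨g * h * g⁻¹, hconjNξ h h.2⟩ * ⟨g * x * g⁻¹, hmemu x x.2⟩ := by
      apply Subtype.ext
      push_cast [Subgroup.coe_inclusion]
      group
    rw [hsplit, f.2]
    rw [heφ' (g * h * g⁻¹) (hconjNξ h h.2) (by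
      have h2 : g⁻¹ * (g * (h : G) * g⁻¹) * g = h := by group
      rw [h2]; exact h.2)]
    exact congrFun (congrArg _ (rep_congr φ (Subtype.ext (by group)))) _
  set Eu : ↥(indCarrier ιξ φ) →ₗ[k] ↥(indCarrier ιξ φ) :=
    { toFun := fun f => ⟨fun x : ↥N => eφ (f.1 ⟨g⁻¹ * x * g, hmemd x x.2⟩), hmemEu f⟩
      map_add' := fun f f' => by
        apply Subtype.ext
        funext x
        show eφ ((f + f').1 _) = eφ (f.1 _) + eφ (f'.1 _)
        rw [← map_add]
        rfl
      map_smul' := fun c f => by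
        apply Subtype.ext
        funext x
        show eφ ((c • f).1 _) = c • eφ (f.1 _)
        rw [← map_smul]
        rfl } with hEudef
  set Ed : ↥(indCarrier ιξ φ) →ₗ[k] ↥(indCarrier ιξ φ) :=
    { toFun := fun f => ⟨fun x : ↥N => eφ.symm (f.1 ⟨g * x * g⁻¹, hmemu x x.2⟩), hmemEd f⟩
      map_add' := fun f f' => by
        apply Subtype.ext
        funext x
        show eφ.symm ((f + f').1 _) = eφ.symm (f.1 _) + eφ.symm (f'.1 _)
        rw [← map_add]
        rfl
      map_smul' := fun c f => by
        apply Subtype.ext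
        funext x
        show eφ.symm ((c • f).1 _) = c • eφ.symm (f.1 _)
        rw [← map_smul]
        rfl } with hEddef
  have hud : ∀ f, Eu (Ed f) = f := by
    intro f
    apply Subtype.ext
    funext x
    show eφ (eφ.symm (f.1 ⟨g * (g⁻¹ * (x : G) * g) * g⁻¹,
      by rw [show g * (g⁻¹ * (x : G) * g) * g⁻¹ = (x : G) from by group]; exact x.2⟩)) = f.1 x
    rw [eφ.apply_symm_apply]
    have harg : (⟨g * (g⁻¹ * (x : G) * g) * g⁻¹,
        by rw [show g * (g⁻¹ * (x : G) * g) * g⁻¹ = (x : G) from by group]; exact x.2⟩ : ↥N)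
        = x := Subtype.ext (by group)
    rw [harg]
  have hdu : ∀ f, Ed (Eu f) = f := by
    intro f
    apply Subtype.ext
    funext x
    show eφ.symm (eφ (f.1 ⟨g⁻¹ * (g * (x : G) * g⁻¹) * g,
      by rw [show g⁻¹ * (g * (x : G) * g⁻¹) * g = (x : G) from by group]; exact x.2⟩)) = f.1 x
    rw [eφ.symm_apply_apply]
    have harg : (⟨g⁻¹ * (g * (x : G) * g⁻¹) * g,
        by rw [show g⁻¹ * (g * (x : G) * g⁻¹) * g = (x : G) from by group]; exact x.2⟩ : ↥N)
        = x := Subtype.ext (by group)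
    rw [harg]
  set E' : ↥(indCarrier ιξ φ) ≃ₗ[k] ↥(indCarrier ιξ φ) :=
    LinearEquiv.ofLinear Eu Ed (LinearMap.ext hud) (LinearMap.ext hdu) with hE'def
  have hE' : ∀ (n : G) (hn : n ∈ N) (hn' : g * n * g⁻¹ ∈ N) (f : ↥(indCarrier ιξ φ)),
      E' (ρInd ⟨n, hn⟩ f) = ρInd ⟨g * n * g⁻¹, hn'⟩ (E' f) := by
    intro n hn hn' f
    apply Subtype.ext
    funext x
    show eφ (f.1 ((⟨g⁻¹ * (x : G) * g, hmemd x x.2⟩ : ↥N) * ⟨n, hn⟩))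
      = eφ (f.1 ⟨g⁻¹ * ((x * (⟨g * n * g⁻¹, hn'⟩ : ↥N) : ↥N) : G) * g,
          hmemd _ (x * (⟨g * n * g⁻¹, hn'⟩ : ↥N)).2⟩)
    apply congrArg
    have harg : ((⟨g⁻¹ * (x : G) * g, hmemd x x.2⟩ : ↥N) * ⟨n, hn⟩)
        = (⟨g⁻¹ * ((x * (⟨g * n * g⁻¹, hn'⟩ : ↥N) : ↥N) : G) * g,
            hmemd _ (x * (⟨g * n * g⁻¹, hn'⟩ : ↥N)).2⟩ : ↥N) := by
      apply Subtype.ext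
      push_cast
      group
    rw [harg]
  have hsymm : ∀ (a : ↥N) (u), eχ.symm (ρInd a u) = χ a (eχ.symm u) := by
    intro a u
    have h1 := heχ a (eχ.symm u)
    rw [eχ.apply_symm_apply] at h1
    rw [← h1, eχ.symm_apply_apply]
  refine ⟨(eχ.trans E').trans eχ.symm, ?_⟩
  intro x hx hx' v
  simp only [LinearEquiv.trans_apply]
  rw [heχ, hE' x hx hx', hsymm]

end PartI
end Stmt6
namespace Stmt6
section PartIIinfra

variable {V W : Type u} [AddCommGroup V] [Module k V] [AddCommGroup W] [Module k W]

/-- Conjugation of endomorphisms by a linear equivalence, as a monoid hom. -/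
def conjMonoidHom (e : V ≃ₗ[k] W) : Module.End k V →* Module.End k W where
  toFun A := (e : V →ₗ[k] W) ∘ₗ A ∘ₗ (e.symm : W →ₗ[k] V)
  map_one' := by
    ext w
    simp
  map_mul' A B := by
    ext w
    simp [Module.End.mul_apply]

lemma conjMonoidHom_apply (e : V ≃ₗ[k] W) (A : Module.End k V) (w : W) :
    conjMonoidHom e A w = e (A (e.symm w)) := rfl

variable (N H : Subgroup G)
variable (hMN : ∀ g ∈ N, ∀ x ∈ N ⊓ H, g * x * g⁻¹ ∈ N ⊓ H)
variable (hHN : ∀ g ∈ H, ∀ x ∈ N, g * x * g⁻¹ ∈ N)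
variable (hHM : ∀ g ∈ H, ∀ x ∈ N ⊓ H, g * x * g⁻¹ ∈ N ⊓ H)
variable {Vχ Vξ : Type u}
variable [AddCommGroup Vχ] [Module k Vχ] [AddCommGroup Vξ] [Module k Vξ]
variable (χ : Representation k ↥N Vχ) (ξ : Representation k ↥(N ⊓ H : Subgroup G) Vξ)

/-- The set `H_χ N_ξ` as a subgroup. -/
def supSet (hHχξ : stabilizerIn H N hHN χ ≤ stabilizerIn H (N ⊓ H) hHM ξ) : Subgroup G where
  carrier := {g | ∃ h n : G, h ∈ stabilizerIn H N hHN χ ∧ n ∈ stabilizerIn N (N ⊓ H) hMN ξ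
    ∧ g = h * n}
  one_mem' := ⟨1, 1, Subgroup.one_mem _, Subgroup.one_mem _, by simp⟩
  mul_mem' := by
    rintro a b ⟨h, n, hh, hn, rfl⟩ ⟨h', n', hh', hn', rfl⟩
    refine ⟨h * h', (h'⁻¹ * n * h') * n', Subgroup.mul_mem _ hh hh',
      Subgroup.mul_mem _ ?_ hn', by group⟩
    have h1 := Hξ_norm_Nξ N H hMN hHN hHM ξ
      ((stabilizerIn H (N ⊓ H) hHM ξ).inv_mem (hHχξ hh')) hn
    rwa [inv_inv] at h1
  inv_mem' := by
    rintro a ⟨h, n, hh, hn, rfl⟩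
    exact ⟨h⁻¹, h * n⁻¹ * h⁻¹, Subgroup.inv_mem _ hh,
      Hξ_norm_Nξ N H hMN hHN hHM ξ (hHχξ hh) (Subgroup.inv_mem _ hn), by group⟩

lemma mem_sup_iff (hHχξ : stabilizerIn H N hHN χ ≤ stabilizerIn H (N ⊓ H) hHM ξ) {g : G} :
    g ∈ stabilizerIn H N hHN χ ⊔ stabilizerIn N (N ⊓ H) hMN ξ ↔
    ∃ h n : G, h ∈ stabilizerIn H N hHN χ ∧ n ∈ stabilizerIn N (N ⊓ H) hMN ξ ∧ g = h * n := by
  constructor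
  · intro hg
    have hle : stabilizerIn H N hHN χ ⊔ stabilizerIn N (N ⊓ H) hMN ξ
        ≤ supSet N H hMN hHN hHM χ ξ hHχξ := by
      refine sup_le (fun a ha => ⟨a, 1, ha, Subgroup.one_mem _, by simp⟩)
        (fun a ha => ⟨1, a, Subgroup.one_mem _, ha, by simp⟩)
    exact hle hg
  · rintro ⟨h, n, hh, hn, rfl⟩
    exact Subgroup.mul_mem _ (Subgroup.mem_sup_left hh) (Subgroup.mem_sup_right hn)

include hHN in
lemma sup_inter_N (hHχξ : stabilizerIn H N hHN χ ≤ stabilizerIn H (N ⊓ H) hHM ξ) {x : G}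
    (hx : x ∈ stabilizerIn H N hHN χ ⊔ stabilizerIn N (N ⊓ H) hMN ξ) (hxN : x ∈ N) :
    x ∈ stabilizerIn N (N ⊓ H) hMN ξ := by
  obtain ⟨h, n, hh, hn, rfl⟩ := (mem_sup_iff N H hMN hHN hHM χ ξ hHχξ).mp hx
  have hhN : h ∈ N := by
    have h1 : h = (h * n) * n⁻¹ := by group
    rw [h1]
    exact Subgroup.mul_mem _ hxN (Subgroup.inv_mem _ hn.1)
  have hhM : h ∈ N ⊓ H := Subgroup.mem_inf.mpr ⟨hhN, hh.1⟩
  exact Subgroup.mul_mem _ (M_le_Nξ N H hMN ξ hhM) hn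

end PartIIinfra
end Stmt6
namespace Stmt6
section PartIIeasy

attribute [local instance] Classical.propDecidable

variable (N H : Subgroup G)
variable (hMN : ∀ g ∈ N, ∀ x ∈ N ⊓ H, g * x * g⁻¹ ∈ N ⊓ H)
variable (hHN : ∀ g ∈ H, ∀ x ∈ N, g * x * g⁻¹ ∈ N)
variable (hHM : ∀ g ∈ H, ∀ x ∈ N ⊓ H, g * x * g⁻¹ ∈ N ⊓ H)
variable (hGN : ∀ g ∈ (⊤ : Subgroup G), ∀ x ∈ N, g * x * g⁻¹ ∈ N)
variable {Vχ Vξ Vφ : Type u}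
variable [AddCommGroup Vχ] [Module k Vχ] [AddCommGroup Vξ] [Module k Vξ]
variable [AddCommGroup Vφ] [Module k Vφ]
variable (χ : Representation k ↥N Vχ) (ξ : Representation k ↥(N ⊓ H : Subgroup G) Vξ)
variable (φ : Representation k ↥(stabilizerIn N (N ⊓ H) hMN ξ) Vφ)

local notation "Nξ" => stabilizerIn N (N ⊓ H) hMN ξ
local notation "ιξ" => Subgroup.inclusion (stabilizerIn_le N (N ⊓ H) hMN ξ)
local notation "ρInd" => indRep (Subgroup.inclusion (stabilizerIn_le N (N ⊓ H) hMN ξ)) φ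

include hMN in
/-- If `φ` extends to `H_χ ⊔ N_ξ` then `ξ` extends to `H_χ`. -/
lemma extends_xi_of_extends_phi
    (hres : RestrictIsoDep (N ⊓ H) (stabilizerIn N (N ⊓ H) hMN ξ) ξ φ)
    (hext : RepExtendsDep (stabilizerIn N (N ⊓ H) hMN ξ)
      (stabilizerIn H N hHN χ ⊔ stabilizerIn N (N ⊓ H) hMN ξ) φ) :
    RepExtendsDep (N ⊓ H) (stabilizerIn H N hHN χ) ξ := by
  obtain ⟨σ, e, he⟩ := hext
  obtain ⟨eξ, heξ⟩ := id hres
  have hσ' : ∀ (n : G) (hn : n ∈ Nξ)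
      (hL : n ∈ stabilizerIn H N hHN χ ⊔ stabilizerIn N (N ⊓ H) hMN ξ) (w : Vφ),
      e.symm (σ ⟨n, hL⟩ (e w)) = φ ⟨n, hn⟩ w := by
    intro n hn hL w
    rw [← he n hn hL w, e.symm_apply_apply]
  refine ⟨((conjMonoidHom eξ.symm).comp ((conjMonoidHom e.symm).comp
    (σ.comp (Subgroup.inclusion (le_sup_left : stabilizerIn H N hHN χ ≤ _))))), LinearEquiv.refl k Vξ, ?_⟩
  intro g hK hL v
  show ξ ⟨g, hK⟩ v = eξ.symm (e.symm (σ ⟨g, (le_sup_left : stabilizerIn H N hHN χ ≤ _) hL⟩ (e (eξ v))))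
  rw [hσ' g (M_le_Nξ N H hMN ξ hK) ((le_sup_left : stabilizerIn H N hHN χ ≤ _) hL) (eξ v),
    ← heξ g hK (M_le_Nξ N H hMN ξ hK) v, eξ.symm_apply_apply]

include hHM in
/-- If `χ` extends to `G_χ` then `ξ` extends to `H_χ`. -/
lemma extends_xi_of_extends_chi
    (hξs : RepIsSimple ξ)
    (hres : RestrictIsoDep (N ⊓ H) (stabilizerIn N (N ⊓ H) hMN ξ) ξ φ)
    (hind : IsRepIso χ (indRep (Subgroup.inclusion (stabilizerIn_le N (N ⊓ H) hMN ξ)) φ))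
    (hHχξ : stabilizerIn H N hHN χ ≤ stabilizerIn H (N ⊓ H) hHM ξ)
    (hext : RepExtendsDep N (stabilizerIn ⊤ N hGN χ) χ) :
    RepExtendsDep (N ⊓ H) (stabilizerIn H N hHN χ) ξ := by
  obtain ⟨σ, e, he⟩ := hext
  obtain ⟨eχ, heχ⟩ := hind
  obtain ⟨eξ, heξ⟩ := id hres
  have hσ' : ∀ (n : G) (hn : n ∈ N) (hL : n ∈ stabilizerIn ⊤ N hGN χ) (w : Vχ),
      e.symm (σ ⟨n, hL⟩ (e w)) = χ ⟨n, hn⟩ w := by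
    intro n hn hL w
    rw [← he n hn hL w, e.symm_apply_apply]
  set A : ↥(stabilizerIn H N hHN χ) →* Module.End k ↥(indCarrier ιξ φ) :=
    (conjMonoidHom eχ).comp (((conjMonoidHom e.symm).comp σ).comp
      (Subgroup.inclusion (Hχ_le_Gχ N H hHN hGN χ))) with hAdef
  have hAapply : ∀ (h : ↥(stabilizerIn H N hHN χ)) (f : ↥(indCarrier ιξ φ)),
      A h f = eχ (e.symm (σ ⟨(h : G), Hχ_le_Gχ N H hHN hGN χ h.2⟩ (e (eχ.symm f)))) :=
    fun _ _ => rfl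
  have hAtwist : ∀ (h : ↥(stabilizerIn H N hHN χ)) (m : G) (hm : m ∈ N)
      (hm' : (h : G) * m * (h : G)⁻¹ ∈ N) (f : ↥(indCarrier ιξ φ)),
      A h (ρInd ⟨m, hm⟩ f) = ρInd ⟨(h : G) * m * (h : G)⁻¹, hm'⟩ (A h f) := by
    intro h m hm hm' f
    have h1 : ρInd ⟨m, hm⟩ f = eχ (χ ⟨m, hm⟩ (eχ.symm f)) := by
      rw [heχ, eχ.apply_symm_apply]
    have hstep : e.symm (σ ⟨(h : G), Hχ_le_Gχ N H hHN hGN χ h.2⟩ (e (χ ⟨m, hm⟩ (eχ.symm f))))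
        = χ ⟨(h : G) * m * (h : G)⁻¹, hm'⟩
          (e.symm (σ ⟨(h : G), Hχ_le_Gχ N H hHN hGN χ h.2⟩ (e (eχ.symm f)))) := by
      have h2 : e (χ ⟨m, hm⟩ (eχ.symm f)) = σ ⟨m, N_le_Gχ N hGN χ hm⟩ (e (eχ.symm f)) :=
        he m hm (N_le_Gχ N hGN χ hm) (eχ.symm f)
      rw [h2, ← Module.End.mul_apply, ← map_mul]
      have h3 : ((⟨(h : G), Hχ_le_Gχ N H hHN hGN χ h.2⟩ : ↥(stabilizerIn ⊤ N hGN χ))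
            * ⟨m, N_le_Gχ N hGN χ hm⟩ : ↥(stabilizerIn ⊤ N hGN χ))
          = ⟨(h : G) * m * (h : G)⁻¹, N_le_Gχ N hGN χ hm'⟩
            * ⟨(h : G), Hχ_le_Gχ N H hHN hGN χ h.2⟩ := Subtype.ext (by push_cast; group)
      rw [h3, map_mul, Module.End.mul_apply]
      have h4 := hσ' ((h : G) * m * (h : G)⁻¹) hm' (N_le_Gχ N hGN χ hm')
        (e.symm (σ ⟨(h : G), Hχ_le_Gχ N H hHN hGN χ h.2⟩ (e (eχ.symm f))))
      rw [e.apply_symm_apply] at h4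
      rw [h4]
    rw [hAapply, h1, eχ.symm_apply_apply, hstep, heχ]
    rfl
  have hAvan : ∀ (h : ↥(stabilizerIn H N hHN χ)) (f : ↥(indCarrier ιξ φ)),
      (∀ x : ↥N, (x : G) ∉ Nξ → f.1 x = 0) →
      ∀ x : ↥N, (x : G) ∉ Nξ → (A h f).1 x = 0 := by
    intro h f hf x hx
    refine vanish N H hMN ξ φ hξs hres (h : G) (hHM (h : G) h.2.1)
      (fun m hm => by
        have := hHM (h : G)⁻¹ (H.inv_mem h.2.1) m hm
        rwa [inv_inv] at this) (hHχξ h.2).2 (A h) (fun m hm f' => ?_) f hf x hx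
    exact hAtwist h m (Subgroup.mem_inf.mp hm).1 _ f'
  have hJsupp : ∀ v : Vφ, ∀ x : ↥N, (x : G) ∉ Nξ → (Jmap N H hMN ξ φ v).1 x = 0 := by
    intro v x hx
    rw [Jmap_apply, dif_neg hx]
  have hAJ : ∀ (h : ↥(stabilizerIn H N hHN χ)) (v : Vφ),
      Jmap N H hMN ξ φ ((A h (Jmap N H hMN ξ φ v)).1 1) = A h (Jmap N H hMN ξ φ v) :=
    fun h v => Jmap_of_supported N H hMN ξ φ _ (hAvan h _ (hJsupp v))
  refine ⟨{ toFun := fun h =>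
              (eξ.symm : Vφ →ₗ[k] Vξ) ∘ₗ (evalMap N H hMN ξ φ 1) ∘ₗ (A h) ∘ₗ
                (Jmap N H hMN ξ φ) ∘ₗ (eξ : Vξ →ₗ[k] Vφ),
            map_one' := ?_,
            map_mul' := ?_ }, LinearEquiv.refl k Vξ, ?_⟩
  · refine LinearMap.ext fun v => ?_
    show eξ.symm ((A 1 (Jmap N H hMN ξ φ (eξ v))).1 1) = v
    rw [map_one]
    show eξ.symm ((Jmap N H hMN ξ φ (eξ v)).1 1) = v
    rw [Jmap_eval_one, eξ.symm_apply_apply]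
  · intro h h'
    refine LinearMap.ext fun v => ?_
    show eξ.symm ((A (h * h') (Jmap N H hMN ξ φ (eξ v))).1 1)
      = eξ.symm ((A h (Jmap N H hMN ξ φ (eξ (eξ.symm
          ((A h' (Jmap N H hMN ξ φ (eξ v))).1 1))))).1 1)
    rw [eξ.apply_symm_apply, hAJ h', map_mul]
    rfl
  · intro m hK hL v
    show ξ ⟨m, hK⟩ v = eξ.symm ((A ⟨m, hL⟩ (Jmap N H hMN ξ φ (eξ v))).1 1)
    have h1 : A ⟨m, hL⟩ (Jmap N H hMN ξ φ (eξ v))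
        = ρInd ⟨m, (Subgroup.mem_inf.mp hK).1⟩ (Jmap N H hMN ξ φ (eξ v)) := by
      have h2 := hσ' m (Subgroup.mem_inf.mp hK).1 (Hχ_le_Gχ N H hHN hGN χ hL)
        (eχ.symm (Jmap N H hMN ξ φ (eξ v)))
      show eχ (e.symm (σ ⟨m, Hχ_le_Gχ N H hHN hGN χ hL⟩
        (e (eχ.symm (Jmap N H hMN ξ φ (eξ v)))))) = _
      rw [h2, heχ, eχ.apply_symm_apply]
    rw [h1]
    have h3 : (ρInd ⟨m, (Subgroup.mem_inf.mp hK).1⟩ (Jmap N H hMN ξ φ (eξ v))).1 1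
        = (Jmap N H hMN ξ φ (eξ v)).1 (1 * ⟨m, (Subgroup.mem_inf.mp hK).1⟩) := rfl
    have h4 : ((1 : ↥N) * ⟨m, (Subgroup.mem_inf.mp hK).1⟩ : ↥N)
        = ⟨m, (Subgroup.mem_inf.mp hK).1⟩ := one_mul _
    have h5 : (((⟨m, (Subgroup.mem_inf.mp hK).1⟩ : ↥N) : G)) ∈ Nξ := M_le_Nξ N H hMN ξ hK
    rw [h3, h4, Jmap_apply, dif_pos h5]
    have h6 : (⟨((⟨m, (Subgroup.mem_inf.mp hK).1⟩ : ↥N) : G), h5⟩ : ↥Nξ)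
        = ⟨m, M_le_Nξ N H hMN ξ hK⟩ := Subtype.ext rfl
    rw [h6, ← heξ m hK (M_le_Nξ N H hMN ξ hK) v, eξ.symm_apply_apply]

end PartIIeasy
end Stmt6
namespace Stmt6
section PartIIhard

attribute [local instance] Classical.propDecidable

variable (N H : Subgroup G)
variable (hMN : ∀ g ∈ N, ∀ x ∈ N ⊓ H, g * x * g⁻¹ ∈ N ⊓ H)
variable (hHN : ∀ g ∈ H, ∀ x ∈ N, g * x * g⁻¹ ∈ N)
variable (hHM : ∀ g ∈ H, ∀ x ∈ N ⊓ H, g * x * g⁻¹ ∈ N ⊓ H)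
variable (hGN : ∀ g ∈ (⊤ : Subgroup G), ∀ x ∈ N, g * x * g⁻¹ ∈ N)
variable {Vχ Vξ Vφ : Type u}
variable [AddCommGroup Vχ] [Module k Vχ] [AddCommGroup Vξ] [Module k Vξ]
variable [AddCommGroup Vφ] [Module k Vφ]
variable (χ : Representation k ↥N Vχ) (ξ : Representation k ↥(N ⊓ H : Subgroup G) Vξ)
variable (φ : Representation k ↥(stabilizerIn N (N ⊓ H) hMN ξ) Vφ)

local notation "Nξ" => stabilizerIn N (N ⊓ H) hMN ξ
local notation "ιξ" => Subgroup.inclusion (stabilizerIn_le N (N ⊓ H) hMN ξ)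
local notation "ρInd" => indRep (Subgroup.inclusion (stabilizerIn_le N (N ⊓ H) hMN ξ)) φ

include hHN hHM in
/-- If `ξ` extends to `H_χ`, then `φ` extends to `H_χ N_ξ`, with the extension literally
restricting to `φ`. -/
lemma extends_phi_of_extends_xi [IsAlgClosed k] [FiniteDimensional k Vφ]
    (hξs : RepIsSimple ξ)
    (hres : RestrictIsoDep (N ⊓ H) (stabilizerIn N (N ⊓ H) hMN ξ) ξ φ)
    (hind : IsRepIso χ (indRep (Subgroup.inclusion (stabilizerIn_le N (N ⊓ H) hMN ξ)) φ))
    (hHχξ : stabilizerIn H N hHN χ ≤ stabilizerIn H (N ⊓ H) hHM ξ)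
    (hext : RepExtendsDep (N ⊓ H) (stabilizerIn H N hHN χ) ξ) :
    ∃ σ : Representation k ↥(stabilizerIn H N hHN χ ⊔ stabilizerIn N (N ⊓ H) hMN ξ) Vφ,
      ∀ (n : G) (hn : n ∈ stabilizerIn N (N ⊓ H) hMN ξ)
        (hn' : n ∈ stabilizerIn H N hHN χ ⊔ stabilizerIn N (N ⊓ H) hMN ξ),
        σ ⟨n, hn'⟩ = φ ⟨n, hn⟩ := by
  obtain ⟨τ, e', he'⟩ := hext
  obtain ⟨eξ, heξ⟩ := id hres
  set τt : ↥(stabilizerIn H N hHN χ) →* Module.End k Vφ :=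
    (conjMonoidHom ((e'.symm).trans eξ)).comp τ with hτtdef
  have hτtapply : ∀ h v, τt h v = eξ (e'.symm (τ h (e' (eξ.symm v)))) := by
    intro h v
    simp [hτtdef, conjMonoidHom_apply, LinearEquiv.trans_apply]
  -- τt restricted to M is φ
  have htM : ∀ (m : G) (hm : m ∈ N ⊓ H) (hL : m ∈ stabilizerIn H N hHN χ),
      τt ⟨m, hL⟩ = φ ⟨m, M_le_Nξ N H hMN ξ hm⟩ := by
    intro m hm hL
    refine LinearMap.ext fun v => ?_
    rw [hτtapply]
    rw [← he' m hm hL (eξ.symm v), e'.symm_apply_apply,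
      heξ m hm (M_le_Nξ N H hMN ξ hm), eξ.apply_symm_apply]
  -- τt twists φ over M
  have hMtwist : ∀ (h : ↥(stabilizerIn H N hHN χ)) (m : G) (hm : m ∈ N ⊓ H) (v : Vφ),
      τt h (φ ⟨m, M_le_Nξ N H hMN ξ hm⟩ v)
        = φ ⟨(h : G) * m * (h : G)⁻¹,
            M_le_Nξ N H hMN ξ (hHM (h : G) h.2.1 m hm)⟩ (τt h v) := by
    intro h m hm v
    have hm' : (h : G) * m * (h : G)⁻¹ ∈ N ⊓ H := hHM (h : G) h.2.1 m hm
    have h2 : (h * ⟨m, M_le_Hχ N H hHN χ hm⟩ : ↥(stabilizerIn H N hHN χ))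
        = ⟨(h : G) * m * (h : G)⁻¹, M_le_Hχ N H hHN χ hm'⟩ * h :=
      Subtype.ext (by push_cast; group)
    rw [← htM m hm (M_le_Hχ N H hHN χ hm), ← Module.End.mul_apply, ← map_mul, h2, map_mul,
      Module.End.mul_apply, htM _ hm' (M_le_Hχ N H hHN χ hm')]
  -- τt twists φ over all of N_ξ (Schur)
  have hKEY : ∀ (h : ↥(stabilizerIn H N hHN χ)) (n : G) (hn : n ∈ Nξ)
      (hn' : (h : G) * n * (h : G)⁻¹ ∈ Nξ) (v : Vφ),
      τt h (φ ⟨n, hn⟩ v) = φ ⟨(h : G) * n * (h : G)⁻¹, hn'⟩ (τt h v) := by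
    intro h n hn hn' v
    obtain ⟨c, hc⟩ :=
      isConjInv_phi_of_mem_Hχ N H hMN hHN hHM χ ξ φ hξs hres hind hHχξ h.2
    have hc' : ∀ (n1 : G) (hn1 : n1 ∈ Nξ) (hn1' : (h : G)⁻¹ * n1 * (h : G) ∈ Nξ) (w : Vφ),
        c.symm (φ ⟨n1, hn1⟩ w) = φ ⟨(h : G)⁻¹ * n1 * (h : G), hn1'⟩ (c.symm w) := by
      intro n1 hn1 hn1' w
      have hmm : (h : G) * ((h : G)⁻¹ * n1 * (h : G)) * (h : G)⁻¹ = n1 := by group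
      have hmem : (h : G) * ((h : G)⁻¹ * n1 * (h : G)) * (h : G)⁻¹ ∈ Nξ := by
        rw [hmm]; exact hn1
      have h1 := hc ((h : G)⁻¹ * n1 * (h : G)) hn1' hmem (c.symm w)
      have h3 : (⟨(h : G) * ((h : G)⁻¹ * n1 * (h : G)) * (h : G)⁻¹, hmem⟩ : ↥Nξ)
          = ⟨n1, hn1⟩ := Subtype.ext hmm
      rw [h3, c.apply_symm_apply] at h1
      rw [← h1, c.symm_apply_apply]
    set ρφM : Representation k ↥(N ⊓ H : Subgroup G) Vφ :=
      MonoidHom.comp φ (Subgroup.inclusion (M_le_Nξ N H hMN ξ)) with hρφMdef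
    have hρφMs : RepIsSimple ρφM :=
      repIsSimple_of_iso ξ ρφM eξ (fun m v => heξ m m.2 (M_le_Nξ N H hMN ξ m.2) v) hξs
    set D : Module.End k Vφ := (c.symm : Vφ →ₗ[k] Vφ) ∘ₗ (τt h : Module.End k Vφ) with hDdef
    have hD : ∀ (m : ↥(N ⊓ H : Subgroup G)) (v : Vφ), D (ρφM m v) = ρφM m (D v) := by
      intro m v
      show c.symm (τt h (φ ⟨(m : G), M_le_Nξ N H hMN ξ m.2⟩ v))
        = φ ⟨(m : G), M_le_Nξ N H hMN ξ m.2⟩ (c.symm (τt h v))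
      rw [hMtwist h m m.2 v]
      rw [hc' ((h : G) * m * (h : G)⁻¹) (M_le_Nξ N H hMN ξ (hHM (h : G) h.2.1 m m.2))
        (by
          rw [show (h : G)⁻¹ * ((h : G) * m * (h : G)⁻¹) * (h : G) = (m : G) from by group]
          exact M_le_Nξ N H hMN ξ m.2)]
      exact congrFun (congrArg _ (rep_congr φ (Subtype.ext (by group)))) _
    obtain ⟨μ, hμ⟩ := schur_scalar ρφM hρφMs D hD
    have hτc : ∀ w, τt h w = μ • c w := by
      intro w
      have h1 : c.symm (τt h w) = μ • w := by
        show D w = μ • w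
        rw [hμ]
        rfl
      calc τt h w = c (c.symm (τt h w)) := (c.apply_symm_apply _).symm
        _ = c (μ • w) := by rw [h1]
        _ = μ • c w := by rw [map_smul]
    rw [hτc, hτc, hc n hn hn' v, map_smul]
  -- decomposition of the join
  have hsup := fun (a : ↥(stabilizerIn H N hHN χ ⊔ stabilizerIn N (N ⊓ H) hMN ξ)) =>
    (mem_sup_iff N H hMN hHN hHM χ ξ hHχξ).mp a.2
  choose hf nf hmh hmn hpr using hsup
  have hWD : ∀ (a : ↥(stabilizerIn H N hHN χ ⊔ stabilizerIn N (N ⊓ H) hMN ξ))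
      (h n : G) (hh : h ∈ stabilizerIn H N hHN χ) (hn : n ∈ Nξ), (a : G) = h * n →
      (τt ⟨hf a, hmh a⟩) * (φ ⟨nf a, hmn a⟩) = (τt ⟨h, hh⟩) * (φ ⟨n, hn⟩) := by
    intro a h n hh hn heq
    have heq2 : hf a * nf a = h * n := (hpr a).symm.trans heq
    have hu2 : (hf a)⁻¹ * h = nf a * n⁻¹ := by
      have h1 : (hf a)⁻¹ * (hf a * nf a) * n⁻¹ = nf a * n⁻¹ := by group
      rw [heq2] at h1
      rw [← h1]
      group
    have huH : (hf a)⁻¹ * h ∈ stabilizerIn H N hHN χ :=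
      Subgroup.mul_mem _ (Subgroup.inv_mem _ (hmh a)) hh
    have huN : (hf a)⁻¹ * h ∈ Nξ := by
      rw [hu2]
      exact Subgroup.mul_mem _ (hmn a) (Subgroup.inv_mem _ hn)
    have huM : (hf a)⁻¹ * h ∈ N ⊓ H := Subgroup.mem_inf.mpr ⟨huN.1, huH.1⟩
    have h3 : (⟨h, hh⟩ : ↥(stabilizerIn H N hHN χ))
        = ⟨hf a, hmh a⟩ * ⟨(hf a)⁻¹ * h, huH⟩ := Subtype.ext (by push_cast; group)
    have h4 : (⟨nf a, hmn a⟩ : ↥Nξ) = ⟨(hf a)⁻¹ * h, huN⟩ * ⟨n, hn⟩ := by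
      apply Subtype.ext
      push_cast
      rw [hu2]
      group
    rw [h3, h4, map_mul, map_mul, htM _ huM huH, mul_assoc]
  refine ⟨{ toFun := fun a => (τt ⟨hf a, hmh a⟩) * (φ ⟨nf a, hmn a⟩),
            map_one' := ?_,
            map_mul' := ?_ }, ?_⟩
  · show (τt ⟨hf 1, hmh 1⟩) * (φ ⟨nf 1, hmn 1⟩) = 1
    rw [hWD 1 1 1 (Subgroup.one_mem _) (Subgroup.one_mem _) (by simp),
      show (⟨(1 : G), Subgroup.one_mem _⟩ : ↥(stabilizerIn H N hHN χ)) = 1 from rfl,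
      show (⟨(1 : G), Subgroup.one_mem _⟩ : ↥Nξ) = 1 from rfl, map_one, map_one, one_mul]
  · intro a b
    show (τt ⟨hf (a * b), hmh (a * b)⟩) * (φ ⟨nf (a * b), hmn (a * b)⟩)
      = ((τt ⟨hf a, hmh a⟩) * (φ ⟨nf a, hmn a⟩)) * ((τt ⟨hf b, hmh b⟩) * (φ ⟨nf b, hmn b⟩))
    have hnb : (hf b)⁻¹ * nf a * hf b ∈ Nξ := by
      have h1 := Hξ_norm_Nξ N H hMN hHN hHM ξ
        ((stabilizerIn H (N ⊓ H) hHM ξ).inv_mem (hHχξ (hmh b))) (hmn a)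
      rwa [inv_inv] at h1
    have hprod : ((a * b : ↥(stabilizerIn H N hHN χ ⊔ stabilizerIn N (N ⊓ H) hMN ξ)) : G)
        = (hf a * hf b) * (((hf b)⁻¹ * nf a * hf b) * nf b) := by
      push_cast
      rw [hpr a, hpr b]
      group
    rw [hWD (a * b) _ _ (Subgroup.mul_mem _ (hmh a) (hmh b))
      (Subgroup.mul_mem _ hnb (hmn b)) hprod]
    have e1 : (⟨hf a * hf b, Subgroup.mul_mem _ (hmh a) (hmh b)⟩
        : ↥(stabilizerIn H N hHN χ)) = ⟨hf a, hmh a⟩ * ⟨hf b, hmh b⟩ := rfl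
    have e2 : (⟨((hf b)⁻¹ * nf a * hf b) * nf b, Subgroup.mul_mem _ hnb (hmn b)⟩ : ↥Nξ)
        = ⟨(hf b)⁻¹ * nf a * hf b, hnb⟩ * ⟨nf b, hmn b⟩ := rfl
    have e3 : (τt ⟨hf b, hmh b⟩) * (φ ⟨(hf b)⁻¹ * nf a * hf b, hnb⟩)
        = (φ ⟨nf a, hmn a⟩) * (τt ⟨hf b, hmh b⟩) := by
      refine LinearMap.ext fun v => ?_
      have h5 := hKEY ⟨hf b, hmh b⟩ ((hf b)⁻¹ * nf a * hf b) hnb (by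
        rw [show (hf b) * ((hf b)⁻¹ * nf a * hf b) * (hf b)⁻¹ = nf a from by group]
        exact hmn a) v
      rw [Module.End.mul_apply, Module.End.mul_apply, h5]
      exact congrFun (congrArg _ (rep_congr φ (Subtype.ext (by group)))) _
    rw [e1, e2, map_mul, map_mul, ← mul_assoc, mul_assoc (τt ⟨hf a, hmh a⟩), e3,
      ← mul_assoc, mul_assoc]
  · intro n hn hn'
    show (τt ⟨hf ⟨n, hn'⟩, hmh ⟨n, hn'⟩⟩) * (φ ⟨nf ⟨n, hn'⟩, hmn ⟨n, hn'⟩⟩) = φ ⟨n, hn⟩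
    rw [hWD ⟨n, hn'⟩ 1 n (Subgroup.one_mem _) hn (by simp),
      show (⟨(1 : G), Subgroup.one_mem _⟩ : ↥(stabilizerIn H N hHN χ)) = 1 from rfl,
      map_one, one_mul]

end PartIIhard
end Stmt6
namespace Stmt6
section PartIIinduce

attribute [local instance] Classical.propDecidable

variable (N H : Subgroup G)
variable (hMN : ∀ g ∈ N, ∀ x ∈ N ⊓ H, g * x * g⁻¹ ∈ N ⊓ H)
variable (hHN : ∀ g ∈ H, ∀ x ∈ N, g * x * g⁻¹ ∈ N)
variable (hHM : ∀ g ∈ H, ∀ x ∈ N ⊓ H, g * x * g⁻¹ ∈ N ⊓ H)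
variable (hGN : ∀ g ∈ (⊤ : Subgroup G), ∀ x ∈ N, g * x * g⁻¹ ∈ N)
variable {Vχ Vξ Vφ : Type u}
variable [AddCommGroup Vχ] [Module k Vχ] [AddCommGroup Vξ] [Module k Vξ]
variable [AddCommGroup Vφ] [Module k Vφ]
variable (χ : Representation k ↥N Vχ) (ξ : Representation k ↥(N ⊓ H : Subgroup G) Vξ)
variable (φ : Representation k ↥(stabilizerIn N (N ⊓ H) hMN ξ) Vφ)

local notation "Nξ" => stabilizerIn N (N ⊓ H) hMN ξ
local notation "ιξ" => Subgroup.inclusion (stabilizerIn_le N (N ⊓ H) hMN ξ)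
local notation "ρInd" => indRep (Subgroup.inclusion (stabilizerIn_le N (N ⊓ H) hMN ξ)) φ

include hHN hHM in
/-- If `ξ` extends to `H_χ` then `χ` extends to `G_χ`. -/
lemma extends_chi_of_extends_xi [IsAlgClosed k] [FiniteDimensional k Vφ]
    (hG : (N : Set G) * (H : Set G) = Set.univ)
    (hξs : RepIsSimple ξ)
    (hres : RestrictIsoDep (N ⊓ H) (stabilizerIn N (N ⊓ H) hMN ξ) ξ φ)
    (hind : IsRepIso χ (indRep (Subgroup.inclusion (stabilizerIn_le N (N ⊓ H) hMN ξ)) φ))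
    (hHχξ : stabilizerIn H N hHN χ ≤ stabilizerIn H (N ⊓ H) hHM ξ)
    (hext : RepExtendsDep (N ⊓ H) (stabilizerIn H N hHN χ) ξ) :
    RepExtendsDep N (stabilizerIn ⊤ N hGN χ) χ := by
  obtain ⟨σL, hσL⟩ :=
    extends_phi_of_extends_xi N H hMN hHN hHM χ ξ φ hξs hres hind hHχξ hext
  obtain ⟨eχ, heχ⟩ := id hind
  -- decomposition of `G_χ` as `(H_χ ⊔ N_ξ) * N`
  have hdec : ∀ y : ↥(stabilizerIn ⊤ N hGN χ), ∃ l n : G,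
      l ∈ stabilizerIn H N hHN χ ⊔ stabilizerIn N (N ⊓ H) hMN ξ ∧ n ∈ N
        ∧ (y : G) = l * n := by
    intro y
    have h1 : (y : G) ∈ (N : Set G) * (H : Set G) := by rw [hG]; exact Set.mem_univ _
    obtain ⟨n₀, hn₀, h₀, hh₀, hmul⟩ := h1
    have hh₀Gχ : h₀ ∈ stabilizerIn ⊤ N hGN χ := by
      have h2 : h₀ = n₀⁻¹ * (y : G) := by rw [← hmul]; group
      rw [h2]
      exact Subgroup.mul_mem _ (Subgroup.inv_mem _ (N_le_Gχ N hGN χ hn₀)) y.2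
    have hh₀Hχ : h₀ ∈ stabilizerIn H N hHN χ := ⟨hh₀, hh₀Gχ.2⟩
    refine ⟨h₀, h₀⁻¹ * n₀ * h₀, Subgroup.mem_sup_left hh₀Hχ, ?_, by rw [← hmul]; group⟩
    have h3 := hHN h₀⁻¹ (H.inv_mem hh₀) n₀ hn₀
    rwa [inv_inv] at h3
  choose lf nf hml hmn2 hpr2 using hdec
  set val : (y : ↥(stabilizerIn ⊤ N hGN χ)) → (↥(indCarrier ιξ φ) →ₗ[k] Vφ) :=
    fun y => (σL ⟨lf y, hml y⟩ : Module.End k Vφ) ∘ₗ evalMap N H hMN ξ φ ⟨nf y, hmn2 y⟩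
    with hvaldef
  have hWD2 : ∀ (y : ↥(stabilizerIn ⊤ N hGN χ)) (l n : G)
      (hl : l ∈ stabilizerIn H N hHN χ ⊔ stabilizerIn N (N ⊓ H) hMN ξ) (hn : n ∈ N)
      (f : ↥(indCarrier ιξ φ)), (y : G) = l * n → val y f = σL ⟨l, hl⟩ (f.1 ⟨n, hn⟩) := by
    intro y l n hl hn f heq
    have heq2 : lf y * nf y = l * n := (hpr2 y).symm.trans heq
    have hu2 : (lf y)⁻¹ * l = nf y * n⁻¹ := by
      have h1 : (lf y)⁻¹ * (lf y * nf y) * n⁻¹ = nf y * n⁻¹ := by group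
      rw [heq2] at h1
      rw [← h1]
      group
    have huL : (lf y)⁻¹ * l ∈ stabilizerIn H N hHN χ ⊔ stabilizerIn N (N ⊓ H) hMN ξ :=
      Subgroup.mul_mem _ (Subgroup.inv_mem _ (hml y)) hl
    have huN : (lf y)⁻¹ * l ∈ N := by
      rw [hu2]
      exact Subgroup.mul_mem _ (hmn2 y) (Subgroup.inv_mem _ hn)
    have huNξ : (lf y)⁻¹ * l ∈ Nξ := sup_inter_N N H hMN hHN hHM χ ξ hHχξ huL huN
    have h3 : (⟨l, hl⟩ : ↥(stabilizerIn H N hHN χ ⊔ stabilizerIn N (N ⊓ H) hMN ξ))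
        = ⟨lf y, hml y⟩ * ⟨(lf y)⁻¹ * l, huL⟩ := Subtype.ext (by push_cast; group)
    have h4 : (⟨nf y, hmn2 y⟩ : ↥N) = ιξ ⟨(lf y)⁻¹ * l, huNξ⟩ * ⟨n, hn⟩ := by
      apply Subtype.ext
      push_cast [Subgroup.coe_inclusion]
      rw [hu2]
      group
    show σL ⟨lf y, hml y⟩ (f.1 ⟨nf y, hmn2 y⟩) = σL ⟨l, hl⟩ (f.1 ⟨n, hn⟩)
    rw [h4, f.2 ⟨(lf y)⁻¹ * l, huNξ⟩ ⟨n, hn⟩, h3, map_mul, Module.End.mul_apply,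
      hσL ((lf y)⁻¹ * l) huNξ huL]
  have hmemSW : ∀ (g : ↥(stabilizerIn ⊤ N hGN χ)) (f : ↥(indCarrier ιξ φ)),
      (fun x : ↥N => val ⟨(x : G) * (g : G),
        Subgroup.mul_mem _ (N_le_Gχ N hGN χ x.2) g.2⟩ f) ∈ indCarrier ιξ φ := by
    intro g f h x
    beta_reduce
    set y : ↥(stabilizerIn ⊤ N hGN χ) :=
      ⟨(x : G) * (g : G), Subgroup.mul_mem _ (N_le_Gχ N hGN χ x.2) g.2⟩ with hydef
    have hsupmem : (h : G) ∈ stabilizerIn H N hHN χ ⊔ stabilizerIn N (N ⊓ H) hMN ξ :=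
      Subgroup.mem_sup_right h.2
    rw [hWD2 ⟨((ιξ h * x : ↥N) : G) * (g : G),
        Subgroup.mul_mem _ (N_le_Gχ N hGN χ (ιξ h * x).2) g.2⟩
      ((h : G) * lf y) (nf y) (Subgroup.mul_mem _ hsupmem (hml y)) (hmn2 y) f
      (by
        have h9 : (x : G) * (g : G) = lf y * nf y := hpr2 y
        push_cast [Subgroup.coe_inclusion]
        rw [mul_assoc, h9, mul_assoc])]
    rw [show (⟨(h : G) * lf y, Subgroup.mul_mem _ hsupmem (hml y)⟩
        : ↥(stabilizerIn H N hHN χ ⊔ stabilizerIn N (N ⊓ H) hMN ξ))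
        = ⟨(h : G), hsupmem⟩ * ⟨lf y, hml y⟩ from rfl, map_mul, Module.End.mul_apply,
      hσL (h : G) h.2 hsupmem]
    rfl
  have hone : ∀ (f : ↥(indCarrier ιξ φ)) (x : ↥N)
      (pf : (x : G) * ((1 : ↥(stabilizerIn ⊤ N hGN χ)) : G) ∈ stabilizerIn ⊤ N hGN χ),
      val ⟨(x : G) * ((1 : ↥(stabilizerIn ⊤ N hGN χ)) : G), pf⟩ f = f.1 x := by
    intro f x pf
    rw [hWD2 _ 1 (x : G) (Subgroup.one_mem _) x.2 f (by push_cast; rw [mul_one, one_mul])]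
    show (σL 1) (f.1 ⟨(x : G), x.2⟩) = f.1 x
    rw [map_one]
    rfl
  have hmulval : ∀ (g g' : ↥(stabilizerIn ⊤ N hGN χ)) (f : ↥(indCarrier ιξ φ)) (x : ↥N)
      (pf : (x : G) * ((g : G) * (g' : G)) ∈ stabilizerIn ⊤ N hGN χ)
      (pf1 : (x : G) * (g : G) ∈ stabilizerIn ⊤ N hGN χ)
      (pf2 : nf ⟨(x : G) * (g : G), pf1⟩ * (g' : G) ∈ stabilizerIn ⊤ N hGN χ),
      val ⟨(x : G) * ((g : G) * (g' : G)), pf⟩ f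
        = σL ⟨lf ⟨(x : G) * (g : G), pf1⟩, hml _⟩
            (val ⟨nf ⟨(x : G) * (g : G), pf1⟩ * (g' : G), pf2⟩ f) := by
    intro g g' f x pf pf1 pf2
    set y1 : ↥(stabilizerIn ⊤ N hGN χ) := ⟨(x : G) * (g : G), pf1⟩ with hy1def
    set y2 : ↥(stabilizerIn ⊤ N hGN χ) := ⟨nf y1 * (g' : G), pf2⟩ with hy2def
    rw [hWD2 _ (lf y1 * lf y2) (nf y2) (Subgroup.mul_mem _ (hml y1) (hml y2)) (hmn2 y2) f
      (by
        have p1 : (x : G) * (g : G) = lf y1 * nf y1 := hpr2 y1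
        have p2 : nf y1 * (g' : G) = lf y2 * nf y2 := hpr2 y2
        show (x : G) * ((g : G) * (g' : G)) = lf y1 * lf y2 * nf y2
        rw [← mul_assoc, p1, mul_assoc, p2, ← mul_assoc])]
    rw [show (⟨lf y1 * lf y2, Subgroup.mul_mem _ (hml y1) (hml y2)⟩
        : ↥(stabilizerIn H N hHN χ ⊔ stabilizerIn N (N ⊓ H) hMN ξ))
        = ⟨lf y1, hml y1⟩ * ⟨lf y2, hml y2⟩ from rfl, map_mul, Module.End.mul_apply]
    rfl
  set SW : ↥(stabilizerIn ⊤ N hGN χ) →* Module.End k ↥(indCarrier ιξ φ) :=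
    { toFun := fun g =>
        { toFun := fun f => ⟨fun x : ↥N => val ⟨(x : G) * (g : G),
            Subgroup.mul_mem _ (N_le_Gχ N hGN χ x.2) g.2⟩ f, hmemSW g f⟩,
          map_add' := fun f f' => Subtype.ext (funext fun x => LinearMap.map_add _ f f'),
          map_smul' := fun c f => Subtype.ext (funext fun x => LinearMap.map_smul _ c f) },
      map_one' := LinearMap.ext fun f => Subtype.ext (funext fun x => hone f x
        (Subgroup.mul_mem _ (N_le_Gχ N hGN χ x.2) (Subgroup.one_mem _))),
      map_mul' := fun g g' => LinearMap.ext fun f => Subtype.ext (funext fun x =>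
        hmulval g g' f x
          (Subgroup.mul_mem _ (N_le_Gχ N hGN χ x.2) (Subgroup.mul_mem _ g.2 g'.2))
          (Subgroup.mul_mem _ (N_le_Gχ N hGN χ x.2) g.2)
          (Subgroup.mul_mem _ (N_le_Gχ N hGN χ (hmn2 _)) g'.2)) } with hSWdef
  -- SW restricts to the induced representation on N
  have hSN : ∀ (n : G) (hn : n ∈ N) (hL : n ∈ stabilizerIn ⊤ N hGN χ)
      (f : ↥(indCarrier ιξ φ)), SW ⟨n, hL⟩ f = ρInd ⟨n, hn⟩ f := by
    intro n hn hL f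
    apply Subtype.ext
    funext x
    show val ⟨(x : G) * n, Subgroup.mul_mem _ (N_le_Gχ N hGN χ x.2) hL⟩ f
      = f.1 (x * ⟨n, hn⟩)
    rw [hWD2 _ 1 ((x : G) * n) (Subgroup.one_mem _) (Subgroup.mul_mem _ x.2 hn) f
      (by show (x : G) * n = 1 * ((x : G) * n); rw [one_mul])]
    show (σL 1) (f.1 ⟨(x : G) * n, Subgroup.mul_mem _ x.2 hn⟩) = f.1 (x * ⟨n, hn⟩)
    rw [map_one]
    rfl
  refine ⟨(conjMonoidHom eχ.symm).comp SW, LinearEquiv.refl k Vχ, ?_⟩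
  intro n hn hL v
  show χ ⟨n, hn⟩ v = eχ.symm (SW ⟨n, hL⟩ (eχ v))
  rw [hSN n hn hL (eχ v), ← heχ, eχ.symm_apply_apply]

end PartIIinduce
end Stmt6
/-- Let `k` be an algebraically closed field of characteristic `ℓ > 0`.
Suppose `G = NH` is a finite group with `N ⊴ G` and `H ≤ G` such that `M := N ∩ H` is normal
in `N`. Let `χ` be a simple `kN`-module, `ξ` a simple `kM`-module lying under `χ`, and `φ` a
simple `kN_ξ`-module lying over `ξ` such that `χ ≅ Ind^N_{N_ξ} φ`. Assume further that
`H_χ ≤ H_ξ` and that `ξ ≅ Res^{N_ξ}_M φ`. Then (i) `H_χ = H_φ ≤ H_ξ`, and (ii) the following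
are equivalent: `χ` extends to `G_χ`; `ξ` extends to `H_χ`; `φ` extends to `H_χ N_ξ`. -/
theorem stabilizers_eq_and_extends_tfae
    (k : Type u) [Field k] [IsAlgClosed k] (ℓ : ℕ) [CharP k ℓ] (hℓ : 0 < ℓ)
    (G : Type u) [Group G] [Finite G]
    (N H : Subgroup G) (hN : N.Normal)
    (hG : (N : Set G) * (H : Set G) = Set.univ)
    -- `M := N ⊓ H` is normal in `N`:
    (hMN : ∀ g ∈ N, ∀ x ∈ N ⊓ H, g * x * g⁻¹ ∈ N ⊓ H)
    -- `H` normalizes `N` and `M` (automatic since `N ⊴ G`; recorded to form the stabilizers):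
    (hHN : ∀ g ∈ H, ∀ x ∈ N, g * x * g⁻¹ ∈ N)
    (hHM : ∀ g ∈ H, ∀ x ∈ N ⊓ H, g * x * g⁻¹ ∈ N ⊓ H)
    -- `G` normalizes `N` (automatic since `N ⊴ G`):
    (hGN : ∀ g ∈ (⊤ : Subgroup G), ∀ x ∈ N, g * x * g⁻¹ ∈ N)
    (Vχ : Type u) [AddCommGroup Vχ] [Module k Vχ] [FiniteDimensional k Vχ]
    (Vξ : Type u) [AddCommGroup Vξ] [Module k Vξ] [FiniteDimensional k Vξ]
    (Vφ : Type u) [AddCommGroup Vφ] [Module k Vφ] [FiniteDimensional k Vφ]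
    (χ : Representation k ↥N Vχ) (hχ : RepIsSimple χ)
    (ξ : Representation k ↥(N ⊓ H : Subgroup G) Vξ) (hξ : RepIsSimple ξ)
    (hunder : LiesOverDep (N ⊓ H) N ξ χ)
    (φ : Representation k ↥(stabilizerIn N (N ⊓ H) hMN ξ) Vφ) (hφ : RepIsSimple φ)
    (hover : LiesOverDep (N ⊓ H) (stabilizerIn N (N ⊓ H) hMN ξ) ξ φ)
    -- `χ ≅ Ind^N_{N_ξ} φ`:
    (hind : IsRepIso χ (indRep (Subgroup.inclusion (stabilizerIn_le N (N ⊓ H) hMN ξ)) φ))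
    -- `H_χ ≤ H_ξ`:
    (hHχξ : stabilizerIn H N hHN χ ≤ stabilizerIn H (N ⊓ H) hHM ξ)
    -- `ξ ≅ Res^{N_ξ}_M φ`:
    (hres : RestrictIsoDep (N ⊓ H) (stabilizerIn N (N ⊓ H) hMN ξ) ξ φ) :
    -- (i) `H_χ = H_φ` and this group is contained in `H_ξ`:
    ((stabilizerIn H N hHN χ : Set G) =
        {g : G | g ∈ stabilizerIn H (N ⊓ H) hHM ξ ∧
          IsConjInv (stabilizerIn N (N ⊓ H) hMN ξ) φ g} ∧
      stabilizerIn H N hHN χ ≤ stabilizerIn H (N ⊓ H) hHM ξ) ∧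
    -- (ii) `χ` extends to `G_χ` ⟺ `ξ` extends to `H_χ` ⟺ `φ` extends to `H_χ N_ξ`:
    ((RepExtendsDep N (stabilizerIn ⊤ N hGN χ) χ ↔
        RepExtendsDep (N ⊓ H) (stabilizerIn H N hHN χ) ξ) ∧
      (RepExtendsDep (N ⊓ H) (stabilizerIn H N hHN χ) ξ ↔
        RepExtendsDep (stabilizerIn N (N ⊓ H) hMN ξ)
          (stabilizerIn H N hHN χ ⊔ stabilizerIn N (N ⊓ H) hMN ξ) φ)) := by
  refine ⟨⟨?_, hHχξ⟩, ?_, ?_⟩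
  · ext g
    constructor
    · intro hg
      exact ⟨hHχξ hg,
        Stmt6.isConjInv_phi_of_mem_Hχ N H hMN hHN hHM χ ξ φ hξ hres hind hHχξ hg⟩
    · rintro ⟨hgξ, hgφ⟩
      exact ⟨hgξ.1, Stmt6.isConjInv_chi_of_mem_Hφ N H hMN hHN hHM χ ξ φ hind hgξ hgφ⟩
  · constructor
    · intro hext
      exact Stmt6.extends_xi_of_extends_chi N H hMN hHN hHM hGN χ ξ φ hξ hres hind hHχξ hext
    · intro hext
      exact Stmt6.extends_chi_of_extends_xi N H hMN hHN hHM hGN χ ξ φ hG hξ hres hind hHχξ hext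
  · constructor
    · intro hext
      obtain ⟨σ, hσ⟩ :=
        Stmt6.extends_phi_of_extends_xi N H hMN hHN hHM χ ξ φ hξ hres hind hHχξ hext
      exact ⟨σ, LinearEquiv.refl k Vφ, fun g hK hL v => by rw [hσ g hK hL]; rfl⟩
    · intro hext
      exact Stmt6.extends_xi_of_extends_phi N H hMN hHN χ ξ φ hres hext
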